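/- arXiv:2410.16584 — 7 statements merged into one kernel-verified Lean document; each statement's English description precedes it below -/
import Mathlib

section
/- Let p ≥ 1 be an odd integer, h an integer coprime to p, and ζ = e^{2πi/p}. Then the sawtooth value ((h/p)) equals (i/(2p)) · Σ_{n=1}^{p−1} cot(πn/p) · ζ^{hn}. -/
open Real Complex Finset


lemma sum_mul_geom {p : ℕ} (hp : p ≠ 0) {x : ℂ} (hx : x ≠ 1) (hxp : x ^ p = 1) :
    (∑ k ∈ range p, (k : ℂ) * x ^ k) * (x - 1) = p := by
  have hgeom : ∑ k ∈ range p, x ^ k = 0 := by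
    rw [geom_sum_eq hx, hxp, sub_self, zero_div]
  rw [Finset.sum_mul]
  calc ∑ k ∈ range p, (k:ℂ) * x^k * (x-1)
      = ∑ k ∈ range p, ((((k+1:ℕ):ℂ) * x^(k+1) - (k:ℂ)*x^k) - x * x^k) := by
        refine Finset.sum_congr rfl fun k _ => ?_; push_cast; ring
    _ = (((p:ℕ):ℂ) * x^p - ((0:ℕ):ℂ) * x^0) - x * ∑ k ∈ range p, x^k := by
        rw [Finset.sum_sub_distrib, Finset.sum_range_sub (fun k => (k:ℂ) * x^k), ← Finset.mul_sum]
    _ = p := by rw [hxp, hgeom]; norm_num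

lemma sum_root_range {p : ℕ} {z : ℂ} (hz : IsPrimitiveRoot z p) (m : ℕ) :
    ∑ n ∈ range p, z ^ (m * n) = if p ∣ m then (p:ℂ) else 0 := by
  simp_rw [pow_mul]
  by_cases hd : p ∣ m
  · rw [if_pos hd]
    have h1 : z ^ m = 1 := (hz.pow_eq_one_iff_dvd m).mpr hd
    simp [h1]
  · rw [if_neg hd]
    have h1 : z ^ m ≠ 1 := fun h => hd ((hz.pow_eq_one_iff_dvd m).mp h)
    rw [geom_sum_eq h1, ← pow_mul, mul_comm m p, pow_mul, hz.pow_eq_one, one_pow, sub_self, zero_div]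

lemma sum_root_Icc {p : ℕ} (hp : p ≠ 0) {z : ℂ} (hz : IsPrimitiveRoot z p) (m : ℕ) :
    ∑ n ∈ Icc 1 (p-1), z ^ (m * n) = (if p ∣ m then (p:ℂ) else 0) - 1 := by
  have hins : range p = insert 0 (Icc 1 (p-1)) := by
    ext n
    simp only [Finset.mem_range, Finset.mem_insert, Finset.mem_Icc]
    omega
  have h0 : (0:ℕ) ∉ Icc 1 (p-1) := by simp
  rw [← sum_root_range hz m, hins, Finset.sum_insert h0, mul_zero, pow_zero]
  ring

lemma cot_eq (z : ℂ) (hz : Complex.sin z ≠ 0) :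
    Complex.cos z / Complex.sin z
      = Complex.I * (Complex.exp (2*Complex.I*z) + 1) / (Complex.exp (2*Complex.I*z) - 1) := by
  have pyth := Complex.sin_sq_add_cos_sq z
  have hIsq : Complex.I ^ 2 = -1 := Complex.I_sq
  have hexp : Complex.exp (2*Complex.I*z) = (Complex.cos z + Complex.sin z * Complex.I)^2 := by
    rw [show (2:ℂ)*Complex.I*z = z*Complex.I + z*Complex.I by ring, Complex.exp_add,
      Complex.exp_mul_I]
    ring
  have hfac : Complex.exp (2*Complex.I*z) - 1
      = 2*Complex.I*Complex.sin z*(Complex.cos z + Complex.sin z*Complex.I) := by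
    rw [hexp]
    linear_combination pyth - Complex.sin z ^ 2 * hIsq
  have hu : Complex.cos z + Complex.sin z * Complex.I ≠ 0 := by
    rw [← Complex.exp_mul_I]; exact Complex.exp_ne_zero _
  have hne : Complex.exp (2*Complex.I*z) - 1 ≠ 0 := by
    rw [hfac]
    exact mul_ne_zero (mul_ne_zero (mul_ne_zero two_ne_zero Complex.I_ne_zero) hz) hu
  rw [div_eq_div_iff hz hne, hexp]
  linear_combination (Complex.cos z + Complex.I * Complex.sin z) * pyth
    - (Complex.cos z + Complex.I * Complex.sin z) * Complex.sin z ^ 2 * hIsq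

lemma g_eq {p a : ℕ} {z : ℂ} (hz : IsPrimitiveRoot z p)
    (ha1 : 1 ≤ a) (ha2 : a < p) :
    ∑ n ∈ Icc 1 (p-1), (z^n + 1)/(z^n - 1) * z^(a*n) = (p:ℂ) - 2*a := by
  have hp : p ≠ 0 := by omega
  have hpc : (p:ℂ) ≠ 0 := Nat.cast_ne_zero.mpr hp
  have hstep : ∀ n ∈ Icc 1 (p-1),
      (z^n + 1)/(z^n - 1) * z^(a*n)
        = z^(a*n) + (2/p) * ∑ k ∈ range p, (k:ℂ) * z^((k+a)*n) := by
    intro n hn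
    simp only [Finset.mem_Icc] at hn
    have hnd : ¬ p ∣ n := by
      intro hd
      have := Nat.le_of_dvd (by omega) hd
      omega
    have hne1 : z^n ≠ 1 := fun hh => hnd ((hz.pow_eq_one_iff_dvd n).mp hh)
    have hxp : (z^n)^p = 1 := by
      rw [← pow_mul, mul_comm, pow_mul, hz.pow_eq_one, one_pow]
    have hne0 : z^n - 1 ≠ 0 := sub_ne_zero.mpr hne1
    have hkey : (∑ k ∈ range p, (k:ℂ) * (z^n)^k) = p / (z^n - 1) :=
      (eq_div_iff hne0).mpr (sum_mul_geom hp hne1 hxp)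
    have hrw : ∑ k ∈ range p, (k:ℂ) * z^((k+a)*n)
        = (∑ k ∈ range p, (k:ℂ) * (z^n)^k) * z^(a*n) := by
      rw [Finset.sum_mul]
      refine Finset.sum_congr rfl fun k _ => ?_
      rw [show (k+a)*n = n*k + a*n by ring, pow_add, pow_mul]
      ring
    rw [hrw, hkey]
    field_simp
    ring
  rw [Finset.sum_congr rfl hstep, Finset.sum_add_distrib, ← Finset.mul_sum, Finset.sum_comm]
  have had : ¬ p ∣ a := by
    intro hd
    have := Nat.le_of_dvd (by omega) hd
    omega
  rw [sum_root_Icc hp hz a, if_neg had]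
  have hswap : ∀ k ∈ range p, ∑ n ∈ Icc 1 (p-1), (k:ℂ) * z^((k+a)*n)
      = (k:ℂ) * ((if p ∣ k+a then (p:ℂ) else 0) - 1) := by
    intro k _
    rw [← Finset.mul_sum, sum_root_Icc hp hz (k+a)]
  rw [Finset.sum_congr rfl hswap]
  have hsplit : ∑ k ∈ range p, (k:ℂ) * ((if p ∣ k+a then (p:ℂ) else 0) - 1)
      = (∑ k ∈ range p, (k:ℂ) * (if p ∣ k+a then (p:ℂ) else 0)) - ∑ k ∈ range p, (k:ℂ) := by
    rw [← Finset.sum_sub_distrib]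
    refine Finset.sum_congr rfl fun k _ => by ring
  rw [hsplit]
  have hsingle : ∑ k ∈ range p, (k:ℂ) * (if p ∣ k+a then (p:ℂ) else 0)
      = ((p-a : ℕ):ℂ) * p := by
    rw [Finset.sum_eq_single (p-a)]
    · rw [if_pos (by exact ⟨1, by omega⟩)]
    · intro j hj hjne
      rw [Finset.mem_range] at hj
      rw [if_neg, mul_zero]
      intro hd
      have h1 : p ≤ j + a := Nat.le_of_dvd (by omega) hd
      have h2 : p ∣ j + a - p := Nat.dvd_sub hd dvd_rfl
      have h3 : j + a - p = 0 := Nat.eq_zero_of_dvd_of_lt h2 (by omega)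
      omega
    · intro hmem
      exact absurd (Finset.mem_range.mpr (by omega)) hmem
  rw [hsingle]
  have hgauss : (∑ k ∈ range p, (k:ℂ)) * 2 = (p:ℂ) * ((p:ℂ) - 1) := by
    have h0 := congrArg (Nat.cast : ℕ → ℂ) (Finset.sum_range_id_mul_two p)
    push_cast [Nat.cast_sub (show 1 ≤ p by omega)] at h0
    exact h0
  have hc1 : ((p-a:ℕ):ℂ) = (p:ℂ) - a := by
    push_cast [Nat.cast_sub (le_of_lt ha2)]; ring
  rw [hc1] at hsingle ⊢
  field_simp
  linear_combination (-1:ℂ) * hgauss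

/-- The sawtooth function: `((r)) = 0` if `r ∈ ℤ`, else `r − ⌊r⌋ − 1/2`. -/
noncomputable def sawtooth (r : ℝ) : ℝ :=
  if Int.fract r = 0 then 0 else r - ⌊r⌋ - 1 / 2

/-- For odd `p ≥ 1`, `h` coprime to `p`, and `ζ = e^{2πi/p}`:
`((h/p)) = (i/(2p)) ∑_{n=1}^{p-1} cot(πn/p) ζ^{hn}`. -/
theorem stmt_2 (p : ℕ) (h : ℤ) (hp : 1 ≤ p) (hodd : Odd p)
    (hco : Int.gcd h (p : ℤ) = 1) :
    (sawtooth ((h : ℝ) / p) : ℂ)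
      = Complex.I / (2 * p) *
        ∑ n ∈ Finset.Icc 1 (p - 1),
          ((Real.cos (Real.pi * n / p) / Real.sin (Real.pi * n / p) : ℝ) : ℂ) *
            Complex.exp (2 * Real.pi * Complex.I / p) ^ (h * n) := by
  rcases Nat.lt_or_ge p 2 with hp2 | hp2
  · -- p = 1
    obtain rfl : p = 1 := by omega
    have he : Finset.Icc 1 (1-1) = (∅ : Finset ℕ) := by decide
    rw [he, Finset.sum_empty, mul_zero]
    simp [sawtooth, Int.fract_intCast]
  · -- p ≥ 2
    have hp0 : p ≠ 0 := by omega
    have hpR : (0:ℝ) < p := by positivity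
    have hpc : (p:ℂ) ≠ 0 := Nat.cast_ne_zero.mpr hp0
    set z : ℂ := Complex.exp (2 * Real.pi * Complex.I / p) with hzdef
    have hprim : IsPrimitiveRoot z p := Complex.isPrimitiveRoot_exp p hp0
    have hz0 : z ≠ 0 := Complex.exp_ne_zero _
    -- the residue a
    set a : ℕ := (h % (p:ℤ)).toNat with hadef
    have hpZ : (0:ℤ) < (p:ℤ) := by exact_mod_cast hp0.bot_lt
    have hmod0 : 0 ≤ h % (p:ℤ) := Int.emod_nonneg h (by omega)
    have hmodlt : h % (p:ℤ) < p := Int.emod_lt_of_pos h hpZ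
    have haz : (a:ℤ) = h % (p:ℤ) := Int.toNat_of_nonneg hmod0
    have halt : a < p := by
      have : (a:ℤ) < (p:ℤ) := haz ▸ hmodlt
      exact_mod_cast this
    have ha0 : 1 ≤ a := by
      rcases Nat.eq_zero_or_pos a with h0 | h1
      · exfalso
        have hza : h % (p:ℤ) = 0 := by rw [← haz, h0]; rfl
        have hdvd : (p:ℤ) ∣ h := Int.dvd_of_emod_eq_zero hza
        have hdg : (p:ℤ) ∣ (Int.gcd h (p:ℤ) : ℤ) := by exact_mod_cast Int.dvd_gcd hdvd dvd_rfl
        rw [hco] at hdg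
        have := Int.le_of_dvd one_pos hdg
        omega
      · exact h1
    have hdiv : (p:ℤ) * (h / (p:ℤ)) + (a:ℤ) = h := by
      rw [haz]; exact Int.mul_ediv_add_emod h p
    -- LHS
    have hsplitR : (h:ℝ)/p = ((h / (p:ℤ) : ℤ) : ℝ) + (a:ℝ)/(p:ℝ) := by
      have hc : (h:ℝ) = (p:ℝ) * ((h / (p:ℤ) : ℤ):ℝ) + (a:ℝ) := by exact_mod_cast hdiv.symm
      rw [hc]; field_simp
    have hfr : Int.fract ((h:ℝ)/p) = (a:ℝ) / p := by
      rw [hsplitR, Int.fract_intCast_add, Int.fract_eq_self.mpr]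
      constructor
      · positivity
      · rw [div_lt_one hpR]; exact_mod_cast halt
    have hlhs : sawtooth ((h:ℝ)/p) = (a:ℝ)/p - 1/2 := by
      rw [sawtooth, if_neg (by rw [hfr]; positivity)]
      have hfl := Int.self_sub_floor ((h:ℝ)/p)
      rw [hfr] at hfl
      linarith
    -- RHS termwise
    have hterm : ∀ n ∈ Finset.Icc 1 (p-1),
        ((Real.cos (Real.pi * n / p) / Real.sin (Real.pi * n / p) : ℝ) : ℂ) * z ^ (h * (n:ℤ))
          = Complex.I * ((z^n + 1)/(z^n - 1) * z^(a*n)) := by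
      intro n hn
      simp only [Finset.mem_Icc] at hn
      have hn1 : 1 ≤ n := hn.1
      have hnp : n < p := by omega
      set x : ℝ := Real.pi * n / p with hxdef
      have hx0 : 0 < x := by
        have : (0:ℝ) < n := by exact_mod_cast hn1
        positivity
      have hxpi : x < Real.pi := by
        rw [hxdef, div_lt_iff₀ hpR]
        have hnpR : (n:ℝ) < p := by exact_mod_cast hnp
        nlinarith [Real.pi_pos]
      have hsinR : Real.sin x ≠ 0 := ne_of_gt (Real.sin_pos_of_pos_of_lt_pi hx0 hxpi)
      have hsinC : Complex.sin (x:ℂ) ≠ 0 := by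
        rw [← Complex.ofReal_sin]
        exact_mod_cast hsinR
      have hE : Complex.exp (2*Complex.I*(x:ℂ)) = z^n := by
        rw [hzdef, ← Complex.exp_nat_mul]
        congr 1
        rw [hxdef]
        push_cast
        ring
      have hzh : z ^ (h * (n:ℤ)) = z ^ (a*n) := by
        rw [zpow_mul, show h = (p:ℤ) * (h / (p:ℤ)) + (a:ℤ) from hdiv.symm,
          zpow_add₀ hz0, zpow_mul, zpow_natCast, zpow_natCast, hprim.pow_eq_one, one_zpow,
          one_mul, zpow_natCast, ← pow_mul]
      rw [hzh, Complex.ofReal_div, Complex.ofReal_cos, Complex.ofReal_sin,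
        cot_eq (x:ℂ) hsinC, hE]
      ring
    rw [Finset.sum_congr rfl hterm, ← Finset.mul_sum, g_eq hprim ha0 halt, hlhs]
    push_cast
    have hIsq : Complex.I ^ 2 = -1 := Complex.I_sq
    field_simp
    linear_combination (2*(a:ℂ) - (p:ℂ)) * hIsq
end

section
/- Let p be an odd positive integer and q an integer coprime to p. Then the Dedekind–Rademacher sum s(q, p; 1/2, 0) = Σ_{h mod p} ((h/p)) · (((qh)/p + 1/2)) equals (1/(4p)) · Σ_{ℓ=1}^{p−1} (−1)^ℓ · csc(πℓ/p) · cot(πqℓ/p). -/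
open Real

/-- The Dedekind–Rademacher sum `s(q, p; 1/2, 0) = ∑_{h mod p} ((h/p))((qh/p + 1/2))`. -/
noncomputable def dedekindRademacherSum (q : ℤ) (p : ℕ) : ℝ :=
  ∑ h ∈ Finset.range p, sawtooth ((h : ℝ) / p) * sawtooth ((q : ℝ) * h / p + 1 / 2)

open Finset

noncomputable def ggAux (ζ : ℂ) (p : ℕ) (k : ℤ) : ℂ :=
  ∑ ℓ ∈ Finset.Icc 1 (p-1), ζ ^ ((ℓ : ℤ) * k) / (1 - ζ ^ ℓ)

lemma zeta_ne_zero {p : ℕ} {ζ : ℂ} (hp : 0 < p) (hζ : IsPrimitiveRoot ζ p) : ζ ≠ 0 :=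
  hζ.ne_zero hp.ne'

lemma zeta_pow_ne_one {p : ℕ} {ζ : ℂ} (hζ : IsPrimitiveRoot ζ p) {ℓ : ℕ}
    (h1 : 1 ≤ ℓ) (h2 : ℓ ≤ p - 1) : ζ ^ ℓ ≠ 1 := by
  intro h
  have hd := (IsPrimitiveRoot.pow_eq_one_iff_dvd hζ ℓ).mp h
  have := Nat.le_of_dvd (by omega) hd
  omega

lemma zeta_zpow_ne_one {p : ℕ} {ζ : ℂ} (hζ : IsPrimitiveRoot ζ p) {c : ℤ}
    (hc : ¬ (p:ℤ) ∣ c) : ζ ^ c ≠ 1 := fun h => hc ((hζ.zpow_eq_one_iff_dvd c).mp h)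

lemma zeta_zpow_eq_of_dvd {p : ℕ} {ζ : ℂ} (hp : 0 < p) (hζ : IsPrimitiveRoot ζ p)
    {a b : ℤ} (h : (p:ℤ) ∣ (a - b)) : ζ ^ a = ζ ^ b := by
  have hz : ζ ≠ 0 := zeta_ne_zero hp hζ
  have h1 : ζ ^ (a - b) = 1 := (hζ.zpow_eq_one_iff_dvd _).mpr h
  have h2 := zpow_add₀ hz (a - b) b
  rw [sub_add_cancel] at h2
  rw [h2, h1, one_mul]

lemma geom_zeta {p : ℕ} {ζ : ℂ} (hp : 0 < p) (hζ : IsPrimitiveRoot ζ p) (k : ℤ) :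
    ∑ h ∈ Finset.range p, ζ ^ (k * (h:ℤ)) = if (p:ℤ) ∣ k then (p : ℂ) else 0 := by
  have hrw : ∀ h : ℕ, ζ ^ (k * (h:ℤ)) = (ζ ^ k) ^ h := by
    intro h; rw [zpow_mul, zpow_natCast]
  simp only [hrw]
  by_cases hd : (p:ℤ) ∣ k
  · have : ζ ^ k = 1 := (hζ.zpow_eq_one_iff_dvd k).mpr hd
    simp [this, hd]
  · have hne : ζ ^ k ≠ 1 := zeta_zpow_ne_one hζ hd
    rw [geom_sum_eq hne, if_neg hd]
    have hone : (ζ ^ k) ^ p = 1 := by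
      rw [← zpow_natCast, ← zpow_mul, mul_comm, zpow_mul, zpow_natCast, hζ.pow_eq_one, one_zpow]
    rw [hone, sub_self, zero_div]

lemma ggAux_congr {p : ℕ} {ζ : ℂ} (hp : 0 < p) (hζ : IsPrimitiveRoot ζ p)
    {a b : ℤ} (h : (p:ℤ) ∣ (a - b)) : ggAux ζ p a = ggAux ζ p b := by
  unfold ggAux
  refine Finset.sum_congr rfl fun ℓ _ => ?_
  congr 1
  obtain ⟨d, hd⟩ := h
  exact zeta_zpow_eq_of_dvd hp hζ ⟨(ℓ : ℤ) * d, by rw [← mul_sub, hd]; ring⟩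

lemma ggAux_zero {p : ℕ} {ζ : ℂ} (hp : 0 < p) (hζ : IsPrimitiveRoot ζ p) :
    ggAux ζ p 0 = ((p:ℂ) - 1) / 2 := by
  have hz : ζ ≠ 0 := zeta_ne_zero hp hζ
  unfold ggAux
  simp only [mul_zero, zpow_zero]
  have key : ∑ ℓ ∈ Finset.Icc 1 (p-1), (1:ℂ) / (1 - ζ ^ ℓ)
      = ∑ ℓ ∈ Finset.Icc 1 (p-1), (1 - 1 / (1 - ζ ^ ℓ)) := by
    refine Finset.sum_nbij' (fun ℓ => p - ℓ) (fun ℓ => p - ℓ) ?_ ?_ ?_ ?_ ?_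
    · intro a ha; simp only [Finset.mem_Icc] at *; omega
    · intro a ha; simp only [Finset.mem_Icc] at *; omega
    · intro a ha; simp only [Finset.mem_Icc] at ha; show p - (p - a) = a; omega
    · intro a ha; simp only [Finset.mem_Icc] at ha; show p - (p - a) = a; omega
    · intro a ha
      simp only [Finset.mem_Icc] at ha
      have hane : ζ ^ a ≠ 1 := zeta_pow_ne_one hζ ha.1 ha.2
      have hane0 : ζ ^ a ≠ 0 := pow_ne_zero _ hz
      show (1:ℂ) / (1 - ζ ^ a) = 1 - 1 / (1 - ζ ^ (p - a))
      have hpa : ζ ^ (p - a) = (ζ ^ a)⁻¹ := by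
        have h1 : ζ ^ (p - a) * ζ ^ a = 1 := by
          rw [← pow_add, Nat.sub_add_cancel (by omega), hζ.pow_eq_one]
        field_simp at h1 ⊢
        linear_combination h1
      have hd1 : (1:ℂ) - ζ ^ a ≠ 0 := sub_ne_zero.mpr (Ne.symm hane)
      have hd2 : (1:ℂ) - (ζ ^ a)⁻¹ ≠ 0 := by
        rw [sub_ne_zero]
        intro h; apply hane
        rw [← inv_inv (ζ^a), ← h, inv_one]
      have key2 : (1:ℂ)/(1-ζ^a) + 1/(1-(ζ^a)⁻¹) = 1 := by
        rw [div_add_div _ _ hd1 hd2, div_eq_one_iff_eq (mul_ne_zero hd1 hd2)]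
        linear_combination - mul_inv_cancel₀ hane0
      rw [hpa]
      linear_combination key2
  have h1 : (1:ℕ) ≤ p := hp
  have h2 : (2:ℂ) * ∑ ℓ ∈ Finset.Icc 1 (p-1), (1:ℂ) / (1 - ζ ^ ℓ) = (p:ℂ) - 1 := by
    rw [two_mul]
    nth_rewrite 2 [key]
    rw [← Finset.sum_add_distrib]
    simp only [add_sub_cancel]
    rw [Finset.sum_const, Nat.card_Icc]
    have h3 : p - 1 + 1 - 1 = p - 1 := by omega
    rw [h3, nsmul_eq_mul]
    push_cast [Nat.cast_sub h1]
    ring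
  field_simp at h2 ⊢
  linear_combination h2

lemma sum_range_eq_icc {M : Type*} [AddCommMonoid M] {p : ℕ} (hp : 0 < p) (f : ℕ → M) :
    ∑ x ∈ Finset.range p, f x = f 0 + ∑ x ∈ Finset.Icc 1 (p-1), f x := by
  have h : Finset.range p = insert 0 (Finset.Icc 1 (p-1)) := by
    ext x; simp only [Finset.mem_range, Finset.mem_insert, Finset.mem_Icc]; omega
  rw [h, Finset.sum_insert (by simp)]

lemma ggAux_step {p : ℕ} {ζ : ℂ} (hp : 0 < p) (hζ : IsPrimitiveRoot ζ p) (k : ℤ) :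
    ggAux ζ p k - ggAux ζ p (k+1) = (if (p:ℤ) ∣ k then (p : ℂ) else 0) - 1 := by
  have hz : ζ ≠ 0 := zeta_ne_zero hp hζ
  unfold ggAux
  rw [← Finset.sum_sub_distrib]
  have key : ∀ ℓ ∈ Finset.Icc 1 (p-1),
      ζ ^ ((ℓ:ℤ) * k) / (1 - ζ ^ ℓ) - ζ ^ ((ℓ:ℤ) * (k+1)) / (1 - ζ ^ ℓ) = ζ ^ (k * (ℓ:ℤ)) := by
    intro ℓ hℓ
    simp only [Finset.mem_Icc] at hℓ
    have hne : ζ ^ ℓ ≠ 1 := zeta_pow_ne_one hζ hℓ.1 hℓ.2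
    have hd : (1:ℂ) - ζ ^ ℓ ≠ 0 := sub_ne_zero.mpr (Ne.symm hne)
    rw [div_sub_div_same, mul_add, zpow_add₀ hz, mul_one, zpow_natCast]
    rw [div_eq_iff hd, mul_comm (ℓ:ℤ) k]
    ring
  rw [Finset.sum_congr rfl key]
  have h2 := sum_range_eq_icc hp (fun h : ℕ => ζ ^ (k * (h:ℤ)))
  rw [geom_zeta hp hζ k] at h2
  simp only [Nat.cast_zero, mul_zero, zpow_zero] at h2
  linear_combination - h2

lemma ggAux_val {p : ℕ} {ζ : ℂ} (hp : 0 < p) (hζ : IsPrimitiveRoot ζ p) :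
    ∀ m : ℕ, 1 ≤ m → m ≤ p - 1 → ggAux ζ p (m:ℤ) = (m:ℂ) - ((p:ℂ)+1)/2 := by
  intro m h1 h2
  induction m, h1 using Nat.le_induction with
  | base =>
    have hs := ggAux_step hp hζ 0
    rw [if_pos (dvd_zero _), ggAux_zero hp hζ, zero_add] at hs
    push_cast
    linear_combination - hs
  | succ m hm ih =>
    have hle : m ≤ p - 1 := by omega
    have hv := ih hle
    have hnd : ¬ (p:ℤ) ∣ (m:ℤ) := by
      rw [Int.natCast_dvd_natCast]
      intro hdvd
      have := Nat.le_of_dvd (by omega) hdvd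
      omega
    have hs := ggAux_step hp hζ (m:ℤ)
    rw [if_neg hnd, zero_sub] at hs
    push_cast at hv ⊢
    linear_combination hv - hs

lemma ggAux_val' {p : ℕ} {ζ : ℂ} (hp : 0 < p) (hζ : IsPrimitiveRoot ζ p)
    {k : ℤ} (hk : ¬ (p:ℤ) ∣ k) : ggAux ζ p k = ((k % (p:ℤ) : ℤ) : ℂ) - ((p:ℂ)+1)/2 := by
  set m : ℕ := (k % (p:ℤ)).toNat with hm
  have hp' : (0:ℤ) < (p:ℤ) := by exact_mod_cast hp
  have h0 : (0:ℤ) ≤ k % p := Int.emod_nonneg k hp'.ne'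
  have hlt : k % p < p := Int.emod_lt_of_pos k hp'
  have hmc : (m : ℤ) = k % p := Int.toNat_of_nonneg h0
  have hne : k % p ≠ 0 := fun h => hk (Int.dvd_of_emod_eq_zero h)
  have hcong : ggAux ζ p k = ggAux ζ p (m:ℤ) := by
    apply ggAux_congr hp hζ
    rw [hmc]
    exact ⟨k / p, by linear_combination - Int.mul_ediv_add_emod k p⟩
  rw [hcong, ggAux_val hp hζ m (by omega) (by omega), ← hmc]
  push_cast
  ring

lemma ggAux_val_dvd {p : ℕ} {ζ : ℂ} (hp : 0 < p) (hζ : IsPrimitiveRoot ζ p)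
    {k : ℤ} (hk : (p:ℤ) ∣ k) : ggAux ζ p k = ((p:ℂ) - 1) / 2 := by
  rw [ggAux_congr hp hζ (by simpa using hk : (p:ℤ) ∣ (k - 0)), ggAux_zero hp hζ]

lemma sawtooth_eq (r : ℝ) : sawtooth r = if Int.fract r = 0 then 0 else Int.fract r - 1/2 := by
  unfold sawtooth
  by_cases h : Int.fract r = 0
  · simp [h]
  · rw [if_neg h, if_neg h, Int.fract]

lemma sawtooth_add_int (r : ℝ) (d : ℤ) : sawtooth (r + d) = sawtooth r := by
  rw [sawtooth_eq, sawtooth_eq, Int.fract_add_intCast]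

lemma sawA {p : ℕ} {ζ : ℂ} (hp : 0 < p) (hζ : IsPrimitiveRoot ζ p) (k : ℤ) :
    ((sawtooth ((k:ℝ)/p) : ℝ) : ℂ) = (ggAux ζ p k - ggAux ζ p (-k)) / (2*p) := by
  have hp0 : (0:ℝ) < p := by exact_mod_cast hp
  have hpz : (p:ℂ) ≠ 0 := by exact_mod_cast hp0.ne'
  have hpI : (0:ℤ) < (p:ℤ) := by exact_mod_cast hp
  obtain ⟨m, hmc⟩ : ∃ m : ℕ, (m:ℤ) = k % (p:ℤ) :=
    ⟨(k % (p:ℤ)).toNat, Int.toNat_of_nonneg (Int.emod_nonneg k hpI.ne')⟩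
  have hmlt : (m:ℤ) < p := by rw [hmc]; exact Int.emod_lt_of_pos k hpI
  have hdvdkm : (p:ℤ) ∣ (k - m) := by
    rw [hmc]; exact ⟨k / p, by linear_combination - Int.mul_ediv_add_emod k p⟩
  -- reduce LHS to m
  have hL : sawtooth ((k:ℝ)/p) = sawtooth ((m:ℝ)/p) := by
    obtain ⟨d, hd⟩ := hdvdkm
    have : (k:ℝ)/p = (m:ℝ)/p + (d:ℤ) := by
      field_simp
      push_cast [show k = m + p * d by linarith [hd]]
      ring
    rw [this, sawtooth_add_int]
  rw [hL]
  have hcong1 : ggAux ζ p k = ggAux ζ p (m:ℤ) := ggAux_congr hp hζ hdvdkm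
  have hcong2 : ggAux ζ p (-k) = ggAux ζ p (-(m:ℤ)) := by
    apply ggAux_congr hp hζ
    have he : -k - (-(m:ℤ)) = -(k - m) := by ring
    rw [he]
    exact dvd_neg.mpr hdvdkm
  rw [hcong1, hcong2]
  by_cases hm0 : m = 0
  · subst hm0
    rw [ggAux_val_dvd hp hζ (by simp), ggAux_val_dvd hp hζ (by simp)]
    simp [sawtooth_eq]
  · have hm1 : 1 ≤ m := by omega
    have hm2 : (m:ℤ) ≤ (p:ℤ) - 1 := by omega
    have hfr : Int.fract ((m:ℝ)/p) = (m:ℝ)/p := by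
      apply Int.fract_eq_self.mpr
      constructor
      · positivity
      · rw [div_lt_one hp0]; exact_mod_cast hmlt
    have hfrne : Int.fract ((m:ℝ)/p) ≠ 0 := by
      rw [hfr]
      positivity
    have hLv : sawtooth ((m:ℝ)/p) = (m:ℝ)/p - 1/2 := by
      rw [sawtooth_eq, if_neg hfrne, hfr]
    have hv1 : ggAux ζ p (m:ℤ) = (m:ℂ) - ((p:ℂ)+1)/2 := ggAux_val hp hζ m hm1 (by omega)
    have hnd : ¬ (p:ℤ) ∣ (-(m:ℤ)) := by
      rw [Int.dvd_neg, Int.natCast_dvd_natCast]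
      intro hdvd
      have := Nat.le_of_dvd (by omega) hdvd
      omega
    have hmod : (-(m:ℤ)) % p = (p:ℤ) - m := by
      have h1 := Int.add_mul_emod_self_left (-(m:ℤ)) p 1
      have h2 : -(m:ℤ) + (p:ℤ) * 1 = (p:ℤ) - m := by ring
      rw [h2] at h1
      rw [← h1]
      apply Int.emod_eq_of_lt <;> omega
    have hv2 : ggAux ζ p (-(m:ℤ)) = ((p:ℂ) - m) - ((p:ℂ)+1)/2 := by
      rw [ggAux_val' hp hζ hnd, hmod]
      push_cast
      ring
    rw [hLv, hv1, hv2]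
    push_cast
    field_simp
    ring

lemma not_dvd_of_bounds {p c : ℤ} (h1 : 0 < c) (h2 : c < p) : ¬ p ∣ c :=
  fun hd => by have := Int.le_of_dvd h1 hd; omega

lemma emod_shift (c p d r : ℤ) (h : c = r + p * d) (h0 : 0 ≤ r) (h1 : r < p) : c % p = r := by
  subst h; rw [Int.add_mul_emod_self_left]; exact Int.emod_eq_of_lt h0 h1

lemma sawB {p : ℕ} {ζ : ℂ} (hp : 0 < p) (hodd : Odd p) (hζ : IsPrimitiveRoot ζ p) (k : ℤ) :
    ((sawtooth ((k:ℝ)/p + 1/2) : ℝ) : ℂ)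
      = (ggAux ζ p (k + ((p:ℤ)+1)/2) - ggAux ζ p (((p:ℤ)+1)/2 - k)) / (2*p) := by
  set S : ℤ := ((p:ℤ)+1)/2 with hSdef
  have hS2 : 2 * S = (p:ℤ) + 1 := by
    obtain ⟨t, ht⟩ := hodd
    omega
  have hp0 : (0:ℝ) < p := by exact_mod_cast hp
  have hpz : (p:ℂ) ≠ 0 := by exact_mod_cast hp0.ne'
  have hpI : (0:ℤ) < (p:ℤ) := by exact_mod_cast hp
  have hS2C : 2 * (S:ℂ) = (p:ℂ) + 1 := by exact_mod_cast congrArg (fun z : ℤ => (z:ℂ)) hS2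
  have hSC : (S:ℂ) = ((p:ℂ)+1)/2 := by linear_combination hS2C / 2
  obtain ⟨m, hmc⟩ : ∃ m : ℕ, (m:ℤ) = k % (p:ℤ) :=
    ⟨(k % (p:ℤ)).toNat, Int.toNat_of_nonneg (Int.emod_nonneg k hpI.ne')⟩
  have hmlt : (m:ℤ) < p := by rw [hmc]; exact Int.emod_lt_of_pos k hpI
  have hdvdkm : (p:ℤ) ∣ (k - m) := by
    rw [hmc]; exact ⟨k / p, by linear_combination - Int.mul_ediv_add_emod k p⟩
  have hL : sawtooth ((k:ℝ)/p + 1/2) = sawtooth ((m:ℝ)/p + 1/2) := by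
    obtain ⟨d, hd⟩ := hdvdkm
    have he : (k:ℝ)/p + 1/2 = ((m:ℝ)/p + 1/2) + (d:ℤ) := by
      field_simp
      push_cast [show k = m + p * d by linarith [hd]]
      ring
    rw [he, sawtooth_add_int]
  rw [hL,
    ggAux_congr hp hζ (show (p:ℤ) ∣ (k + S) - ((m:ℤ) + S) by
      have he : (k + S) - ((m:ℤ) + S) = k - m := by ring
      rw [he]; exact hdvdkm),
    ggAux_congr hp hζ (show (p:ℤ) ∣ (S - k) - (S - (m:ℤ)) by
      have he : (S - k) - (S - (m:ℤ)) = -(k - m) := by ring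
      rw [he]; exact dvd_neg.mpr hdvdkm)]
  clear hL hdvdkm hmc k
  have hnot : ∀ c r : ℤ, c % (p:ℤ) = r → r ≠ 0 → ¬ (p:ℤ) ∣ c := by
    intro c r hr hne hd
    rw [Int.emod_eq_zero_of_dvd hd] at hr
    exact hne hr.symm
  rcases eq_or_lt_of_le (Nat.one_le_iff_ne_zero.mpr hp.ne') with hp1 | hp2
  · -- p = 1
    have hpe : p = 1 := hp1.symm
    subst hpe
    have h0 : ((m:ℝ))/((1:ℕ):ℝ) + 1/2 = (1/2 : ℝ) := by
      have : m = 0 := by omega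
      subst this; norm_num
    rw [h0, sawtooth_eq]
    have hfr : Int.fract ((1:ℝ)/2) = 1/2 := Int.fract_eq_self.mpr (by norm_num)
    rw [hfr]
    norm_num [ggAux, Finset.Icc_eq_empty (by norm_num : ¬(1:ℕ) ≤ 1-1)]
  · have hp3 : 3 ≤ p := by obtain ⟨t, ht⟩ := hodd; omega
    have hS1 : 1 ≤ S := by omega
    have hSp : S ≤ (p:ℤ) - 1 := by omega
    have hmR : (m:ℝ) < p := by exact_mod_cast hmlt
    by_cases hhalf : 2 * m < p
    · -- LHS value m/p
      have hLv : sawtooth ((m:ℝ)/p + 1/2) = (m:ℝ)/p := by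
        have h2m : (2:ℝ) * m < p := by exact_mod_cast hhalf
        have hb : (m:ℝ)/p + 1/2 < 1 := by
          rw [div_add' _ _ _ hp0.ne', div_lt_one hp0]; linarith
        have hfr : Int.fract ((m:ℝ)/p + 1/2) = (m:ℝ)/p + 1/2 :=
          Int.fract_eq_self.mpr ⟨by positivity, hb⟩
        rw [sawtooth_eq, hfr, if_neg (by positivity)]
        ring
      rw [hLv]
      have h2mS : 2*(m:ℤ) < p := by exact_mod_cast hhalf
      by_cases hmid : (m:ℤ) + S = p
      · have hmod2 : (S - (m:ℤ)) % p = 1 := by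
          apply emod_shift _ _ 0 <;> omega
        rw [ggAux_val_dvd hp hζ (by rw [hmid]),
          ggAux_val' hp hζ (hnot _ _ hmod2 one_ne_zero), hmod2]
        have hmC : (m:ℂ) = (p:ℂ) - S := by
          have h := congrArg (fun z : ℤ => (z:ℂ)) (by omega : (m:ℤ) = (p:ℤ) - S)
          push_cast at h
          exact h
        push_cast
        rw [hmC, hSC]
        field_simp
        ring
      · have hmod1 : ((m:ℤ) + S) % p = (m:ℤ) + S := by
          apply Int.emod_eq_of_lt <;> omega
        have hmod2 : (S - (m:ℤ)) % p = S - m := by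
          apply Int.emod_eq_of_lt <;> omega
        rw [ggAux_val' hp hζ (hnot _ _ hmod1 (by omega)), hmod1,
          ggAux_val' hp hζ (hnot _ _ hmod2 (by omega)), hmod2]
        push_cast
        field_simp
        ring
    · -- 2m > p, LHS value m/p - 1
      have h2m : (p:ℝ) < 2 * m := by exact_mod_cast (by omega : p < 2*m)
      have hLv : sawtooth ((m:ℝ)/p + 1/2) = (m:ℝ)/p - 1 := by
        have he : (m:ℝ)/p + 1/2 = ((m:ℝ)/p - 1/2) + ((1:ℤ):ℝ) := by push_cast; ring
        have hlb : (0:ℝ) < (m:ℝ)/p - 1/2 := by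
          rw [sub_pos, lt_div_iff₀ hp0]; linarith
        have hub : (m:ℝ)/p - 1/2 < 1 := by
          rw [sub_lt_iff_lt_add, div_lt_iff₀ hp0]; linarith
        have hfr : Int.fract ((m:ℝ)/p - 1/2) = (m:ℝ)/p - 1/2 :=
          Int.fract_eq_self.mpr ⟨le_of_lt hlb, hub⟩
        rw [he, sawtooth_add_int, sawtooth_eq, hfr, if_neg (ne_of_gt hlb)]
        ring
      rw [hLv]
      have h2mS : (p:ℤ) < 2*(m:ℤ) := by exact_mod_cast (by omega : p < 2*m)
      by_cases hmid : (m:ℤ) = S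
      · have hmod1 : ((m:ℤ) + S) % p = 1 := by
          apply emod_shift _ _ 1 <;> omega
        rw [ggAux_val' hp hζ (hnot _ _ hmod1 one_ne_zero), hmod1,
          ggAux_val_dvd hp hζ (by rw [hmid]; simp)]
        have hmC : (m:ℂ) = (S:ℂ) := by exact_mod_cast congrArg (fun z : ℤ => (z:ℂ)) hmid
        push_cast
        rw [hmC, hSC]
        field_simp
        ring
      · have hmgt : S < (m:ℤ) := by omega
        have hmod1 : ((m:ℤ) + S) % p = (m:ℤ) + S - p := by
          apply emod_shift _ _ 1 <;> omega
        have hmod2 : (S - (m:ℤ)) % p = S - m + p := by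
          apply emod_shift _ _ (-1) <;> omega
        rw [ggAux_val' hp hζ (hnot _ _ hmod1 (by omega)), hmod1,
          ggAux_val' hp hζ (hnot _ _ hmod2 (by omega)), hmod2]
        push_cast
        field_simp
        ring

lemma collapse {p : ℕ} {ζ : ℂ} (hp : 0 < p) (hζ : IsPrimitiveRoot ζ p)
    {c : ℤ} (hc : ¬ (p:ℤ) ∣ c) :
    ∑ ℓ ∈ Finset.Icc 1 (p-1), (if (p:ℤ) ∣ ((ℓ:ℤ) + c) then (p:ℂ) else 0) / (1 - ζ ^ ℓ)
      = (p:ℂ) / (1 - ζ ^ (-c)) := by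
  have hpI : (0:ℤ) < (p:ℤ) := by exact_mod_cast hp
  obtain ⟨m, hmc⟩ : ∃ m : ℕ, (m:ℤ) = (-c) % (p:ℤ) :=
    ⟨((-c) % (p:ℤ)).toNat, Int.toNat_of_nonneg (Int.emod_nonneg _ hpI.ne')⟩
  have hmlt : (m:ℤ) < p := by rw [hmc]; exact Int.emod_lt_of_pos _ hpI
  have hmne : (m:ℤ) ≠ 0 := by
    rw [hmc]
    intro h
    exact hc (Int.dvd_neg.mp (Int.dvd_of_emod_eq_zero h))
  have hdvd : (p:ℤ) ∣ ((m:ℤ) + c) := by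
    rw [hmc]
    have := Int.mul_ediv_add_emod (-c) p
    exact ⟨-((-c)/p), by linarith⟩
  have hmem : m ∈ Finset.Icc 1 (p-1) := by
    simp only [Finset.mem_Icc]; omega
  rw [Finset.sum_eq_single m]
  · rw [if_pos hdvd]
    congr 2
    rw [← zpow_natCast ζ m]
    apply zeta_zpow_eq_of_dvd hp hζ
    have he : (m:ℤ) - (-c) = (m:ℤ) + c := by ring
    rw [he]; exact hdvd
  · intro b hb hbne
    simp only [Finset.mem_Icc] at hb
    rw [if_neg, zero_div]
    intro hbdvd
    apply hbne
    have h0 : ((b:ℤ) + c) % p = 0 := Int.emod_eq_zero_of_dvd hbdvd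
    have h1 : (b:ℤ) % p = (-c) % p := by
      rw [Int.emod_eq_emod_iff_emod_sub_eq_zero]
      have he : (b:ℤ) - (-c) = b + c := by ring
      rw [he, h0]
    have h2 : (b:ℤ) % p = (b:ℤ) := Int.emod_eq_of_lt (by omega) (by omega)
    have : (b:ℤ) = (m:ℤ) := by rw [← h2, h1, hmc]
    exact_mod_cast this
  · intro h
    exact absurd hmem h

lemma innerSumZeta {p : ℕ} {ζ : ℂ} (hp : 0 < p) (hζ : IsPrimitiveRoot ζ p)
    (q S : ℤ) (ℓ m : ℕ) :
    ∑ h ∈ Finset.range p,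
        ((ζ ^ ((ℓ:ℤ) * (h:ℤ)) - ζ ^ (-((ℓ:ℤ) * (h:ℤ))))
          * (ζ ^ ((m:ℤ) * (q * (h:ℤ) + S)) - ζ ^ ((m:ℤ) * (S - q * (h:ℤ)))))
      = ζ ^ ((m:ℤ) * S) *
          (2 * (if (p:ℤ) ∣ ((ℓ:ℤ) + (m:ℤ)*q) then (p:ℂ) else 0)
            - 2 * (if (p:ℤ) ∣ ((ℓ:ℤ) - (m:ℤ)*q) then (p:ℂ) else 0)) := by
  have hz : ζ ≠ 0 := zeta_ne_zero hp hζ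
  have hterm : ∀ h : ℕ,
      ((ζ ^ ((ℓ:ℤ) * (h:ℤ)) - ζ ^ (-((ℓ:ℤ) * (h:ℤ))))
          * (ζ ^ ((m:ℤ) * (q * (h:ℤ) + S)) - ζ ^ ((m:ℤ) * (S - q * (h:ℤ)))))
        = ζ ^ ((m:ℤ) * S) *
            (ζ ^ (((ℓ:ℤ) + (m:ℤ)*q) * (h:ℤ)) - ζ ^ (((ℓ:ℤ) - (m:ℤ)*q) * (h:ℤ))
              - ζ ^ (-(((ℓ:ℤ) - (m:ℤ)*q) * (h:ℤ))) + ζ ^ (-(((ℓ:ℤ) + (m:ℤ)*q) * (h:ℤ)))) := by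
    intro h
    have e1 : ζ ^ ((ℓ:ℤ) * (h:ℤ)) * ζ ^ ((m:ℤ) * (q * (h:ℤ) + S))
        = ζ ^ ((m:ℤ) * S) * ζ ^ (((ℓ:ℤ) + (m:ℤ)*q) * (h:ℤ)) := by
      rw [← zpow_add₀ hz, ← zpow_add₀ hz]; congr 1; ring
    have e2 : ζ ^ ((ℓ:ℤ) * (h:ℤ)) * ζ ^ ((m:ℤ) * (S - q * (h:ℤ)))
        = ζ ^ ((m:ℤ) * S) * ζ ^ (((ℓ:ℤ) - (m:ℤ)*q) * (h:ℤ)) := by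
      rw [← zpow_add₀ hz, ← zpow_add₀ hz]; congr 1; ring
    have e3 : ζ ^ (-((ℓ:ℤ) * (h:ℤ))) * ζ ^ ((m:ℤ) * (q * (h:ℤ) + S))
        = ζ ^ ((m:ℤ) * S) * ζ ^ (-(((ℓ:ℤ) - (m:ℤ)*q) * (h:ℤ))) := by
      rw [← zpow_add₀ hz, ← zpow_add₀ hz]; congr 1; ring
    have e4 : ζ ^ (-((ℓ:ℤ) * (h:ℤ))) * ζ ^ ((m:ℤ) * (S - q * (h:ℤ)))
        = ζ ^ ((m:ℤ) * S) * ζ ^ (-(((ℓ:ℤ) + (m:ℤ)*q) * (h:ℤ))) := by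
      rw [← zpow_add₀ hz, ← zpow_add₀ hz]; congr 1; ring
    linear_combination e1 - e2 - e3 + e4
  rw [Finset.sum_congr rfl (fun h _ => hterm h), ← Finset.mul_sum]
  congr 1
  have e3 : ∀ h:ℕ, ζ ^ (-(((ℓ:ℤ)-(m:ℤ)*q) * (h:ℤ))) = ζ ^ ((-((ℓ:ℤ)-(m:ℤ)*q)) * (h:ℤ)) :=
    fun h => by congr 1; ring
  have e4 : ∀ h:ℕ, ζ ^ (-(((ℓ:ℤ)+(m:ℤ)*q) * (h:ℤ))) = ζ ^ ((-((ℓ:ℤ)+(m:ℤ)*q)) * (h:ℤ)) :=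
    fun h => by congr 1; ring
  have hstep : ∀ h:ℕ, ζ ^ (((ℓ:ℤ) + (m:ℤ)*q) * (h:ℤ)) - ζ ^ (((ℓ:ℤ) - (m:ℤ)*q) * (h:ℤ))
        - ζ ^ (-(((ℓ:ℤ) - (m:ℤ)*q) * (h:ℤ))) + ζ ^ (-(((ℓ:ℤ) + (m:ℤ)*q) * (h:ℤ)))
      = ζ ^ (((ℓ:ℤ) + (m:ℤ)*q) * (h:ℤ)) - ζ ^ (((ℓ:ℤ) - (m:ℤ)*q) * (h:ℤ))
        - ζ ^ ((-((ℓ:ℤ) - (m:ℤ)*q)) * (h:ℤ)) + ζ ^ ((-((ℓ:ℤ) + (m:ℤ)*q)) * (h:ℤ)) := by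
    intro h; rw [e3 h, e4 h]
  rw [Finset.sum_congr rfl (fun h _ => hstep h)]
  rw [Finset.sum_add_distrib, Finset.sum_sub_distrib, Finset.sum_sub_distrib]
  rw [geom_zeta hp hζ, geom_zeta hp hζ, geom_zeta hp hζ, geom_zeta hp hζ]
  simp only [dvd_neg]
  ring

lemma trig_eq {p : ℕ} (hp : 0 < p) (hodd : Odd p) (q : ℤ) (m : ℕ)
    (hm1 : 1 ≤ m) (hm2 : m ≤ p - 1) (hqm : ¬ (p:ℤ) ∣ ((m:ℤ) * q))
    {ζ : ℂ} (hζdef : ζ = Complex.exp (2 * Real.pi * Complex.I / p)) :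
    ((((-1:ℝ)^m * (1/Real.sin (Real.pi*m/p)) * (Real.cos (Real.pi*q*m/p)/Real.sin (Real.pi*q*m/p)))) : ℂ)
      = 2 * ζ ^ ((m:ℤ) * (((p:ℤ)+1)/2))
          * (1/(1 - ζ ^ (-((m:ℤ)*q))) - 1/(1 - ζ ^ ((m:ℤ)*q)))
          / (1 - ζ ^ (m:ℕ)) := by
  have hζ : IsPrimitiveRoot ζ p := hζdef ▸ Complex.isPrimitiveRoot_exp p hp.ne'
  have hpR : (0:ℝ) < p := by exact_mod_cast hp
  have hpC : (p:ℂ) ≠ 0 := by exact_mod_cast hpR.ne'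
  set x : ℝ := Real.pi * m / p with hxdef
  set y : ℝ := Real.pi * q * m / p with hydef
  set w : ℂ := Complex.exp (x * Complex.I) with hwdef
  set v : ℂ := Complex.exp (y * Complex.I) with hvdef
  have hw0 : w ≠ 0 := Complex.exp_ne_zero _
  have hv0 : v ≠ 0 := Complex.exp_ne_zero _
  have hI2 := Complex.I_sq
  -- sin/cos in terms of w, v
  have hsx : (Real.sin x : ℂ) = (w⁻¹ - w) * Complex.I / 2 := by
    rw [Complex.ofReal_sin]
    show ((Complex.exp (-(x:ℂ) * Complex.I) - Complex.exp ((x:ℂ) * Complex.I)) * Complex.I) / 2 = _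
    rw [neg_mul, Complex.exp_neg]
  have hsy : (Real.sin y : ℂ) = (v⁻¹ - v) * Complex.I / 2 := by
    rw [Complex.ofReal_sin]
    show ((Complex.exp (-(y:ℂ) * Complex.I) - Complex.exp ((y:ℂ) * Complex.I)) * Complex.I) / 2 = _
    rw [neg_mul, Complex.exp_neg]
  have hcy : (Real.cos y : ℂ) = (v + v⁻¹) / 2 := by
    rw [Complex.ofReal_cos]
    show (Complex.exp ((y:ℂ) * Complex.I) + Complex.exp (-(y:ℂ) * Complex.I)) / 2 = _
    rw [neg_mul, Complex.exp_neg]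
  -- powers of ζ
  have hζm : ζ ^ (m:ℕ) = w * w := by
    rw [hζdef, ← Complex.exp_nat_mul, hwdef, ← Complex.exp_add]
    congr 1
    rw [hxdef]
    push_cast
    field_simp
    ring
  have hζmq : ζ ^ ((m:ℤ)*q) = v * v := by
    rw [hζdef, ← Complex.exp_int_mul, hvdef, ← Complex.exp_add]
    congr 1
    rw [hydef]
    push_cast
    field_simp
    ring
  have hζmqneg : ζ ^ (-((m:ℤ)*q)) = (v * v)⁻¹ := by
    rw [zpow_neg, hζmq]
  have hS2 : (2:ℤ) * (((p:ℤ)+1)/2) = (p:ℤ) + 1 := by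
    obtain ⟨t, ht⟩ := hodd; omega
  have hζms : ζ ^ ((m:ℤ) * (((p:ℤ)+1)/2)) = (-1:ℂ)^m * w := by
    have hm1C : (-1:ℂ)^m = Complex.exp (m * (Real.pi * Complex.I)) := by
      rw [Complex.exp_nat_mul, Complex.exp_pi_mul_I]
    rw [hζdef, ← Complex.exp_int_mul, hm1C, hwdef, ← Complex.exp_add]
    congr 1
    have hS2C : (2:ℂ) * ((((p:ℤ)+1)/2 : ℤ) : ℂ) = (p:ℂ) + 1 := by exact_mod_cast congrArg (fun z:ℤ => (z:ℂ)) hS2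
    push_cast
    rw [hxdef]
    push_cast
    field_simp
    linear_combination (m:ℂ) * hS2C
  -- nonvanishing of sines
  have hsx0 : Real.sin x ≠ 0 := by
    apply Real.sin_pos_of_pos_of_lt_pi ?_ ?_ |>.ne'
    · rw [hxdef]; positivity
    · rw [hxdef]
      rw [div_lt_iff₀ hpR]
      have : (m:ℝ) < p := by exact_mod_cast (by omega : m < p)
      nlinarith [Real.pi_pos]
  have hsy0 : Real.sin y ≠ 0 := by
    rw [Real.sin_ne_zero_iff]
    intro n hn
    rw [hydef] at hn
    apply hqm
    have : (n:ℝ) * p = q * m := by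
      field_simp at hn
      nlinarith [Real.pi_pos, hn]
    have hz : ((n * p : ℤ) : ℝ) = ((q * m : ℤ):ℝ) := by push_cast; linarith
    have hzz : n * (p:ℤ) = q * m := by exact_mod_cast hz
    exact ⟨n, by linarith [hzz]⟩
  have hsx0C : (Real.sin x : ℂ) ≠ 0 := by exact_mod_cast hsx0
  have hsy0C : (Real.sin y : ℂ) ≠ 0 := by exact_mod_cast hsy0
  -- denominators
  have hd1 : 1 - ζ ^ (m:ℕ) ≠ 0 := sub_ne_zero.mpr (Ne.symm (by
    intro h
    have hd := (hζ.pow_eq_one_iff_dvd m).mp h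
    have := Nat.le_of_dvd (by omega) hd
    omega))
  have hd2 : 1 - ζ ^ ((m:ℤ)*q) ≠ 0 := sub_ne_zero.mpr (Ne.symm (fun h => hqm ((hζ.zpow_eq_one_iff_dvd _).mp h)))
  have hd3 : 1 - ζ ^ (-((m:ℤ)*q)) ≠ 0 := sub_ne_zero.mpr (Ne.symm (fun h => hqm (by
    have := (hζ.zpow_eq_one_iff_dvd _).mp h
    exact (Int.dvd_neg).mp this)))
  rw [hζm, hζmq, hζmqneg, hζms]
  push_cast [-Complex.ofReal_sin, -Complex.ofReal_cos]
  rw [hsx, hsy, hcy]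
  rw [hζm] at hd1
  rw [hζmq] at hd2
  rw [hζmqneg] at hd3
  have hwx : w⁻¹ - w ≠ 0 := by
    intro h; apply hsx0C; rw [hsx, h]; ring
  have hvy : v⁻¹ - v ≠ 0 := by
    intro h; apply hsy0C; rw [hsy, h]; ring
  have hrw3 : 1 - (v*v)⁻¹ = -(1 - v*v)/(v*v) := by
    field_simp
    ring
  rw [hrw3]
  field_simp
  ring_nf
  simp only [Complex.I_sq]
  have hA : (-1 : ℂ) + v^2 ≠ 0 := by
    intro h; apply hd2; linear_combination -h
  linear_combination (0:ℂ) * (mul_inv_cancel₀ hA)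

/-- For odd positive `p` and `q` coprime to `p`:
`s(q,p;1/2,0) = (1/(4p)) ∑_{ℓ=1}^{p−1} (−1)^ℓ csc(πℓ/p) cot(πqℓ/p)`. -/
theorem stmt_8 (p : ℕ) (q : ℤ) (hp : 0 < p) (hodd : Odd p)
    (hco : Int.gcd q (p : ℤ) = 1) :
    dedekindRademacherSum q p
      = 1 / (4 * p) *
          ∑ ℓ ∈ Finset.Icc 1 (p - 1),
            (-1 : ℝ) ^ ℓ * (1 / Real.sin (Real.pi * ℓ / p)) *
              (Real.cos (Real.pi * q * ℓ / p) / Real.sin (Real.pi * q * ℓ / p)) := by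
  have hζ : IsPrimitiveRoot (Complex.exp (2*Real.pi*Complex.I/p)) p :=
    Complex.isPrimitiveRoot_exp p hp.ne'
  set ζ : ℂ := Complex.exp (2*Real.pi*Complex.I/p) with hζdef
  have hpR : (0:ℝ) < p := by exact_mod_cast hp
  have hpC : (p:ℂ) ≠ 0 := by exact_mod_cast hpR.ne'
  have hcop : ∀ m : ℕ, 1 ≤ m → m ≤ p - 1 → ¬ (p:ℤ) ∣ ((m:ℤ) * q) := by
    intro m h1 h2 hdvd
    have hiso : IsCoprime ((p:ℤ)) q := (Int.isCoprime_iff_gcd_eq_one.mpr hco).symm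
    have hpm : (p:ℤ) ∣ (m:ℤ) := hiso.dvd_of_dvd_mul_right hdvd
    have hnat : (p:ℕ) ∣ m := by exact_mod_cast hpm
    have := Nat.le_of_dvd (by omega) hnat
    omega
  rw [← Complex.ofReal_inj]
  unfold dedekindRademacherSum
  push_cast [-Complex.ofReal_sin, -Complex.ofReal_cos]
  -- Step 1: Fourier-expand each term of the h-sum
  have step1 : ∀ h ∈ Finset.range p,
      ((sawtooth ((h:ℝ) / p) : ℂ) * (sawtooth ((q:ℝ) * h / p + 1/2) : ℂ))
        = (∑ ℓ ∈ Finset.Icc 1 (p-1), ∑ m ∈ Finset.Icc 1 (p-1),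
            ((ζ^((ℓ:ℤ)*(h:ℤ)) - ζ^(-((ℓ:ℤ)*(h:ℤ))))/(1-ζ^ℓ))
              * ((ζ^((m:ℤ)*(q*(h:ℤ)+((p:ℤ)+1)/2)) - ζ^((m:ℤ)*(((p:ℤ)+1)/2 - q*(h:ℤ))))/(1-ζ^m)))
            / (4*(p:ℂ)^2) := by
    intro h _
    have h1 := sawA hp hζ (h:ℤ)
    have h2 := sawB hp hodd hζ (q*(h:ℤ))
    push_cast at h1 h2
    rw [h1, h2]
    have hAdiff : ggAux ζ p (h:ℤ) - ggAux ζ p (-(h:ℤ))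
        = ∑ ℓ ∈ Finset.Icc 1 (p-1), (ζ^((ℓ:ℤ)*(h:ℤ)) - ζ^(-((ℓ:ℤ)*(h:ℤ))))/(1-ζ^ℓ) := by
      unfold ggAux
      rw [← Finset.sum_sub_distrib]
      refine Finset.sum_congr rfl fun ℓ _ => ?_
      rw [div_sub_div_same]
      have he : (ℓ:ℤ)*(-(h:ℤ)) = -((ℓ:ℤ)*(h:ℤ)) := by ring
      rw [he]
    have hBdiff : ggAux ζ p (q*(h:ℤ) + ((p:ℤ)+1)/2) - ggAux ζ p (((p:ℤ)+1)/2 - q*(h:ℤ))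
        = ∑ m ∈ Finset.Icc 1 (p-1),
            (ζ^((m:ℤ)*(q*(h:ℤ)+((p:ℤ)+1)/2)) - ζ^((m:ℤ)*(((p:ℤ)+1)/2 - q*(h:ℤ))))/(1-ζ^m) := by
      unfold ggAux
      rw [← Finset.sum_sub_distrib]
      exact Finset.sum_congr rfl fun m _ => div_sub_div_same _ _ _
    rw [hAdiff, hBdiff, div_mul_div_comm, Finset.sum_mul_sum]
    congr 1
    ring
  rw [Finset.sum_congr rfl step1, ← Finset.sum_div]
  -- Step 2: swap summation order
  rw [show (∑ h ∈ Finset.range p, ∑ ℓ ∈ Finset.Icc 1 (p-1), ∑ m ∈ Finset.Icc 1 (p-1),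
        ((ζ^((ℓ:ℤ)*(h:ℤ)) - ζ^(-((ℓ:ℤ)*(h:ℤ))))/(1-ζ^ℓ))
          * ((ζ^((m:ℤ)*(q*(h:ℤ)+((p:ℤ)+1)/2)) - ζ^((m:ℤ)*(((p:ℤ)+1)/2 - q*(h:ℤ))))/(1-ζ^m)))
      = (∑ m ∈ Finset.Icc 1 (p-1), ∑ ℓ ∈ Finset.Icc 1 (p-1), ∑ h ∈ Finset.range p,
        ((ζ^((ℓ:ℤ)*(h:ℤ)) - ζ^(-((ℓ:ℤ)*(h:ℤ))))/(1-ζ^ℓ))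
          * ((ζ^((m:ℤ)*(q*(h:ℤ)+((p:ℤ)+1)/2)) - ζ^((m:ℤ)*(((p:ℤ)+1)/2 - q*(h:ℤ))))/(1-ζ^m)))
      from (Finset.sum_comm).trans
        ((Finset.sum_congr rfl fun ℓ _ => Finset.sum_comm).trans Finset.sum_comm)]
  -- Step 3: per-m evaluation
  have key : ∀ m ∈ Finset.Icc 1 (p-1),
      (∑ ℓ ∈ Finset.Icc 1 (p-1), ∑ h ∈ Finset.range p,
        ((ζ^((ℓ:ℤ)*(h:ℤ)) - ζ^(-((ℓ:ℤ)*(h:ℤ))))/(1-ζ^ℓ))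
          * ((ζ^((m:ℤ)*(q*(h:ℤ)+((p:ℤ)+1)/2)) - ζ^((m:ℤ)*(((p:ℤ)+1)/2 - q*(h:ℤ))))/(1-ζ^m)))
      = (p:ℂ) * ((-1:ℂ)^m * (1/(Real.sin (Real.pi*m/p) : ℂ))
          * ((Real.cos (Real.pi*q*m/p) : ℂ)/(Real.sin (Real.pi*q*m/p) : ℂ))) := by
    intro m hm
    simp only [Finset.mem_Icc] at hm
    have hc1 : ¬(p:ℤ) ∣ ((m:ℤ)*q) := hcop m hm.1 hm.2
    have step2 : ∀ ℓ ∈ Finset.Icc 1 (p-1),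
        (∑ h ∈ Finset.range p,
          ((ζ^((ℓ:ℤ)*(h:ℤ)) - ζ^(-((ℓ:ℤ)*(h:ℤ))))/(1-ζ^ℓ))
            * ((ζ^((m:ℤ)*(q*(h:ℤ)+((p:ℤ)+1)/2)) - ζ^((m:ℤ)*(((p:ℤ)+1)/2 - q*(h:ℤ))))/(1-ζ^m)))
          = ζ ^ ((m:ℤ) * (((p:ℤ)+1)/2)) *
              (2 * (if (p:ℤ) ∣ ((ℓ:ℤ) + (m:ℤ)*q) then (p:ℂ) else 0)
                - 2 * (if (p:ℤ) ∣ ((ℓ:ℤ) - (m:ℤ)*q) then (p:ℂ) else 0))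
              / ((1-ζ^ℓ) * (1-ζ^m)) := by
      intro ℓ _
      have hconv : ∀ h ∈ Finset.range p,
          ((ζ^((ℓ:ℤ)*(h:ℤ)) - ζ^(-((ℓ:ℤ)*(h:ℤ))))/(1-ζ^ℓ))
            * ((ζ^((m:ℤ)*(q*(h:ℤ)+((p:ℤ)+1)/2)) - ζ^((m:ℤ)*(((p:ℤ)+1)/2 - q*(h:ℤ))))/(1-ζ^m))
          = ((ζ^((ℓ:ℤ)*(h:ℤ)) - ζ^(-((ℓ:ℤ)*(h:ℤ))))
              * (ζ^((m:ℤ)*(q*(h:ℤ)+((p:ℤ)+1)/2)) - ζ^((m:ℤ)*(((p:ℤ)+1)/2 - q*(h:ℤ)))))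
              / ((1-ζ^ℓ) * (1-ζ^m)) :=
        fun h _ => div_mul_div_comm _ _ _ _
      rw [Finset.sum_congr rfl hconv, ← Finset.sum_div,
        innerSumZeta hp hζ q (((p:ℤ)+1)/2) ℓ m]
    rw [Finset.sum_congr rfl step2]
    have step3 : ∀ ℓ ∈ Finset.Icc 1 (p-1),
        ζ ^ ((m:ℤ) * (((p:ℤ)+1)/2)) *
            (2 * (if (p:ℤ) ∣ ((ℓ:ℤ) + (m:ℤ)*q) then (p:ℂ) else 0)
              - 2 * (if (p:ℤ) ∣ ((ℓ:ℤ) - (m:ℤ)*q) then (p:ℂ) else 0))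
            / ((1-ζ^ℓ) * (1-ζ^m))
        = (2 * ζ ^ ((m:ℤ) * (((p:ℤ)+1)/2)) / (1-ζ^m))
            * ((if (p:ℤ) ∣ ((ℓ:ℤ) + (m:ℤ)*q) then (p:ℂ) else 0) / (1-ζ^ℓ))
          - (2 * ζ ^ ((m:ℤ) * (((p:ℤ)+1)/2)) / (1-ζ^m))
            * ((if (p:ℤ) ∣ ((ℓ:ℤ) + -((m:ℤ)*q)) then (p:ℂ) else 0) / (1-ζ^ℓ)) := by
      intro ℓ hℓ
      simp only [Finset.mem_Icc] at hℓ
      have ha : (1:ℂ) - ζ^ℓ ≠ 0 := sub_ne_zero.mpr (Ne.symm (zeta_pow_ne_one hζ hℓ.1 hℓ.2))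
      have hb : (1:ℂ) - ζ^m ≠ 0 := sub_ne_zero.mpr (Ne.symm (zeta_pow_ne_one hζ hm.1 hm.2))
      rw [show (ℓ:ℤ) + -((m:ℤ)*q) = (ℓ:ℤ) - (m:ℤ)*q from by ring,
        div_mul_div_comm, div_mul_div_comm, div_sub_div_same,
        mul_comm ((1:ℂ) - ζ^ℓ) ((1:ℂ) - ζ^m)]
      congr 1
      ring
    rw [Finset.sum_congr rfl step3, Finset.sum_sub_distrib, ← Finset.mul_sum, ← Finset.mul_sum,
      collapse hp hζ hc1, collapse hp hζ (by rwa [Int.dvd_neg] : ¬(p:ℤ) ∣ (-((m:ℤ)*q))), neg_neg]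
    have ht := trig_eq hp hodd q m hm.1 hm.2 hc1 hζdef
    push_cast [-Complex.ofReal_sin, -Complex.ofReal_cos] at ht
    rw [ht]
    ring
  rw [Finset.sum_congr rfl key, ← Finset.mul_sum]
  field_simp
  ring_nf
  refine Finset.sum_congr rfl fun x _ => ?_
  ring_nf
end

section
/- Let a₁, …, aₙ be pairwise coprime integers aᵢ ≥ 2, s = ⌊(n−3)/2⌋, and for each integer e ≥ 0 define A_e = {(x₁,…,xₙ) ∈ ℤⁿ : 0 ≤ xᵢ < aᵢ, e + Σ xᵢ/aᵢ < (n−2−Σ1/aᵢ)/2} and B_e = {(x₁,…,xₙ) ∈ ℤⁿ : xᵢ ≥ 0, e + Σ xᵢ/aᵢ < (n−2−Σ1/aᵢ)/2}. Then |B_{s−p}| = Σ_{k=0}^{p} binomial(n+p−k−1, n−1) · |A_{s−k}| for every 0 ≤ p ≤ s. -/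
lemma card_tuple_sum (n m : ℕ) (hn : 1 ≤ n) :
    Nat.card {q : Fin n → ℕ // ∑ i, q i = m} = (n + m - 1).choose (n - 1) := by
  rw [← Nat.card_congr (Sym.equivNatSumOfFintype (Fin n) m), Nat.card_eq_fintype_card,
    Sym.card_sym_eq_choose, Fintype.card_fin,
    ← Nat.choose_symm (show m ≤ n + m - 1 by omega)]
  congr 1
  omega

lemma stmt12_aux (n : ℕ) (hn : 1 ≤ n) (a : Fin n → ℕ) (ha : ∀ i, 1 ≤ a i)
    (s p : ℕ) (hp : p ≤ s) (c : ℚ) (hc : c < (s : ℚ) + 1) :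
    {x : Fin n → ℕ | ((s - p : ℕ) : ℚ) + ∑ i, (x i : ℚ) / (a i) < c}.ncard
      = ∑ k ∈ Finset.range (p + 1),
          (n + p - k - 1).choose (n - 1) *
            {x : Fin n → ℕ | (∀ i, x i < a i) ∧
              ((s - k : ℕ) : ℚ) + ∑ i, (x i : ℚ) / (a i) < c}.ncard := by
  have haq : ∀ i, (0 : ℚ) < a i := fun i => by
    exact_mod_cast Nat.lt_of_lt_of_le Nat.zero_lt_one (ha i)
  set B : Set (Fin n → ℕ) :=
    {x : Fin n → ℕ | ((s - p : ℕ) : ℚ) + ∑ i, (x i : ℚ) / (a i) < c} with hB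
  set A : ℕ → Set (Fin n → ℕ) := fun k =>
    {x : Fin n → ℕ | (∀ i, x i < a i) ∧
      ((s - k : ℕ) : ℚ) + ∑ i, (x i : ℚ) / (a i) < c} with hA
  -- sum decomposition
  have hsum : ∀ q y : Fin n → ℕ,
      ∑ i, (((y i + q i * a i : ℕ) : ℚ)) / (a i)
        = (∑ i, (y i : ℚ) / a i) + ∑ i, (q i : ℚ) := by
    intro q y
    rw [← Finset.sum_add_distrib]
    refine Finset.sum_congr rfl fun i _ => ?_
    rw [Nat.cast_add, Nat.cast_mul, add_div, mul_div_assoc,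
      div_self (ne_of_gt (haq i)), mul_one]
  -- membership iff
  have hmem : ∀ k ≤ p, ∀ q y : Fin n → ℕ, (∑ i, q i = p - k) →
      (((s - p : ℕ) : ℚ) + ∑ i, (((y i + q i * a i : ℕ) : ℚ)) / (a i) < c
        ↔ ((s - k : ℕ) : ℚ) + ∑ i, (y i : ℚ) / a i < c) := by
    intro k hk q y hq
    have h1 : ((s - p : ℕ) : ℚ) = (s : ℚ) - p := by
      rw [Nat.cast_sub hp]
    have h2 : ((s - k : ℕ) : ℚ) = (s : ℚ) - k := by
      rw [Nat.cast_sub (hk.trans hp)]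
    have h3 : (∑ i, (q i : ℚ)) = (p : ℚ) - k := by
      rw [← Nat.cast_sum, hq, Nat.cast_sub hk]
    rw [hsum, h1, h2, h3]
    constructor <;> intro <;> linarith
  -- bound on the nat-div sum
  have hbound : ∀ x ∈ B, ∑ i, x i / a i ≤ p := by
    intro x hx
    by_contra h
    push_neg at h
    have h1 : (p : ℚ) + 1 ≤ ∑ i, ((x i / a i : ℕ) : ℚ) := by
      rw [← Nat.cast_sum]
      exact_mod_cast h
    have h2 : ∀ i ∈ Finset.univ, ((x i / a i : ℕ) : ℚ) ≤ (x i : ℚ) / a i := fun i _ => by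
      exact_mod_cast Nat.cast_div_le
    have h3 := Finset.sum_le_sum h2
    have h4 : ((s - p : ℕ) : ℚ) = (s : ℚ) - p := by rw [Nat.cast_sub hp]
    have hx' : ((s - p : ℕ) : ℚ) + ∑ i, (x i : ℚ) / a i < c := hx
    linarith
  -- finiteness
  have hAfin : ∀ k, (A k).Finite := by
    intro k
    refine Set.Finite.subset (Set.Finite.pi (fun i => Set.finite_Iio (a i))) ?_
    intro x hx
    exact fun i _ => hx.1 i
  have hBfin : B.Finite := by
    refine Set.Finite.subset (Set.Finite.pi
      (fun _ => Set.finite_Iio ((s + 1) * ∑ i, a i))) ?_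
    intro x hx
    intro j _
    simp only [Set.mem_Iio]
    have hx' : ((s - p : ℕ) : ℚ) + ∑ i, (x i : ℚ) / a i < c := hx
    have hterm : ∀ i ∈ Finset.univ, (0:ℚ) ≤ (x i : ℚ) / a i := fun i _ =>
      div_nonneg (Nat.cast_nonneg _) (haq i).le
    have hj : (x j : ℚ) / a j ≤ ∑ i, (x i : ℚ) / a i :=
      Finset.single_le_sum hterm (Finset.mem_univ j)
    have h0 : (0:ℚ) ≤ ((s - p : ℕ) : ℚ) := Nat.cast_nonneg _
    have hlt : (x j : ℚ) / a j < (s : ℚ) + 1 := by linarith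
    have hlt2 : (x j : ℚ) < ((s : ℚ) + 1) * a j := by
      rwa [div_lt_iff₀ (haq j)] at hlt
    have hle : (a j : ℚ) ≤ ∑ i, (a i : ℚ) := by
      have : a j ≤ ∑ i, a i := Finset.single_le_sum (fun i _ => Nat.zero_le _) (Finset.mem_univ j)
      exact_mod_cast this
    have hs1 : (0:ℚ) < (s : ℚ) + 1 := by positivity
    have : (x j : ℚ) < (((s + 1) * ∑ i, a i : ℕ) : ℚ) := by
      push_cast
      nlinarith [haq j]
    exact_mod_cast this
  classical
  haveI hAf : ∀ k : ℕ, Finite ↥(A k) := fun k => (hAfin k).to_subtype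
  haveI hBf : Finite ↥B := hBfin.to_subtype
  haveI hTf : ∀ m : ℕ, Finite {q : Fin n → ℕ // ∑ i, q i = m} := fun m =>
    Finite.of_equiv (Sym (Fin n) m) (Sym.equivNatSumOfFintype (Fin n) m)
  let ψ : (Σ k : Fin (p + 1),
      ({q : Fin n → ℕ // ∑ i, q i = p - (k : ℕ)} × ↥(A (k : ℕ)))) → ↥B :=
    fun z => ⟨fun i => (z.2.2 : Fin n → ℕ) i + (z.2.1 : Fin n → ℕ) i * a i, by
      obtain ⟨k, q, y⟩ := z
      exact (hmem (k : ℕ) (Nat.lt_succ_iff.mp k.2) q.1 y.1 q.2).mpr y.2.2⟩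
  have hbij : Function.Bijective ψ := by
    constructor
    · rintro ⟨⟨k₁, hk₁⟩, ⟨q₁, hq₁⟩, ⟨y₁, hy₁⟩⟩ ⟨⟨k₂, hk₂⟩, ⟨q₂, hq₂⟩, ⟨y₂, hy₂⟩⟩ h
      have hfun : ∀ i, y₁ i + q₁ i * a i = y₂ i + q₂ i * a i := fun i =>
        congrFun (congrArg Subtype.val h) i
      have hy : y₁ = y₂ := by
        funext i
        have h1 := hfun i
        have e1 : y₁ i = (y₁ i + q₁ i * a i) % a i := by
          rw [Nat.add_mul_mod_self_right, Nat.mod_eq_of_lt (hy₁.1 i)]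
        rw [e1, h1, Nat.add_mul_mod_self_right]
        exact Nat.mod_eq_of_lt (hy₂.1 i)
      have hq : q₁ = q₂ := by
        funext i
        have h1 := hfun i
        rw [congrFun hy i] at h1
        have h2 : q₁ i * a i = q₂ i * a i := by omega
        exact Nat.eq_of_mul_eq_mul_right (ha i) h2
      have hk : k₁ = k₂ := by
        subst hq
        rw [hq₁] at hq₂
        simp only [Fin.val_mk] at hq₂
        omega
      subst hy; subst hq; subst hk
      rfl
    · rintro ⟨x, hx⟩
      have ht := hbound x hx
      have hxeq : ∀ i, x i % a i + x i / a i * a i = x i := fun i =>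
        Nat.mod_add_div' (x i) (a i)
      refine ⟨⟨⟨p - ∑ i, x i / a i, Nat.lt_succ_of_le (Nat.sub_le _ _)⟩,
        ⟨fun i => x i / a i, (Nat.sub_sub_self ht).symm⟩,
        ⟨fun i => x i % a i, ⟨fun i => Nat.mod_lt _ (Nat.lt_of_lt_of_le Nat.zero_lt_one (ha i)),
          ?_⟩⟩⟩, ?_⟩
      · exact (hmem _ (Nat.sub_le p _) (fun i => x i / a i) (fun i => x i % a i)
          (Nat.sub_sub_self ht).symm).mp (by simp only [hxeq]; exact hx)
      · apply Subtype.ext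
        funext i
        exact hxeq i
  haveI hPfin : ∀ k : Fin (p + 1),
      Fintype ({q : Fin n → ℕ // ∑ i, q i = p - (k : ℕ)} × ↥(A (k : ℕ))) := fun k =>
    Fintype.ofFinite _
  calc B.ncard = Nat.card ↥B := (Nat.card_coe_set_eq B).symm
    _ = Nat.card (Σ k : Fin (p + 1),
          ({q : Fin n → ℕ // ∑ i, q i = p - (k : ℕ)} × ↥(A (k : ℕ)))) :=
        (Nat.card_eq_of_bijective ψ hbij).symm
    _ = ∑ k : Fin (p + 1), Nat.card
          ({q : Fin n → ℕ // ∑ i, q i = p - (k : ℕ)} × ↥(A (k : ℕ))) := by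
        rw [Nat.card_eq_fintype_card, Fintype.card_sigma]
        exact Finset.sum_congr rfl fun k _ => (Nat.card_eq_fintype_card).symm
    _ = ∑ k : Fin (p + 1), (n + p - (k : ℕ) - 1).choose (n - 1) * (A (k : ℕ)).ncard := by
        refine Finset.sum_congr rfl fun k _ => ?_
        rw [Nat.card_prod, card_tuple_sum n (p - (k : ℕ)) hn, Nat.card_coe_set_eq]
        congr 2
        have : (k : ℕ) ≤ p := Nat.lt_succ_iff.mp k.2
        omega
    _ = ∑ k ∈ Finset.range (p + 1), (n + p - k - 1).choose (n - 1) * (A k).ncard :=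
        Fin.sum_univ_eq_sum_range (fun k => (n + p - k - 1).choose (n - 1) * (A k).ncard) _


/-- With `s = ⌊(n−3)/2⌋`, `A_e` the restricted and `B_e` the unrestricted
lattice-point sets, `|B_{s−p}| = ∑_{k=0}^{p} C(n+p−k−1, n−1)·|A_{s−k}|`
for every `0 ≤ p ≤ s`. -/
theorem stmt_12 (n : ℕ) (hn : 3 ≤ n) (a : Fin n → ℕ) (ha : ∀ i, 2 ≤ a i)
    (hco : ∀ i j, i ≠ j → Nat.Coprime (a i) (a j)) (p : ℕ)
    (hp : p ≤ (n - 3) / 2) :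
    {x : Fin n → ℕ |
        (((n - 3) / 2 - p : ℕ) : ℚ) + ∑ i, (x i : ℚ) / (a i)
          < ((n : ℚ) - 2 - ∑ i, (1 : ℚ) / (a i)) / 2}.ncard
      = ∑ k ∈ Finset.range (p + 1),
          (n + p - k - 1).choose (n - 1) *
            {x : Fin n → ℕ | (∀ i, x i < a i) ∧
              (((n - 3) / 2 - k : ℕ) : ℚ) + ∑ i, (x i : ℚ) / (a i)
                < ((n : ℚ) - 2 - ∑ i, (1 : ℚ) / (a i)) / 2}.ncard := by
  have hc : ((n : ℚ) - 2 - ∑ i, (1 : ℚ) / (a i)) / 2 < (((n - 3) / 2 : ℕ) : ℚ) + 1 := by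
    have hpos : (0 : ℚ) < ∑ i, (1 : ℚ) / (a i) := by
      refine Finset.sum_pos (fun i _ => ?_) ?_
      · have : (0 : ℚ) < (a i : ℚ) := by exact_mod_cast Nat.lt_of_lt_of_le Nat.zero_lt_two (ha i)
        positivity
      · exact Finset.univ_nonempty_iff.mpr ⟨⟨0, by omega⟩⟩
    have hnat : n ≤ 2 * ((n - 3) / 2) + 4 := by omega
    have hq : (n : ℚ) ≤ 2 * (((n - 3) / 2 : ℕ) : ℚ) + 4 := by exact_mod_cast hnat
    linarith
  exact stmt12_aux n (by omega) a (fun i => (ha i).trans' (by omega)) ((n - 3) / 2) p hp _ hc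
end

section
/- Let a₁, …, aₙ be pairwise coprime integers aᵢ ≥ 2 and s = ⌊(n−3)/2⌋. With A_e and B_e as in the lattice-point setup, Σ_{e=0}^{s} (e+1)|A_e| = Σ_{e=0}^{s} (−1)^e · binomial(n−2, e) · |B_e|. -/
open Finset PowerSeries

set_option maxRecDepth 8000 in
private lemma coeff_one_sub_pow (N p : ℕ) :
    (coeff p) ((1 - X) ^ N) = (-1 : ℤ) ^ p * N.choose p := by
  rw [sub_eq_add_neg, add_comm, add_pow, map_sum]
  have h : ∀ k ∈ range (N + 1),
      (coeff p) ((-X : ℤ⟦X⟧) ^ k * 1 ^ (N - k) * (N.choose k : ℤ⟦X⟧))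
        = if k = p then (-1 : ℤ) ^ p * N.choose p else 0 := by
    intro k _
    rw [one_pow, mul_one, show ((-X : ℤ⟦X⟧)) = (-1 : ℤ⟦X⟧) * X by ring, mul_pow]
    rw [show ((N.choose k : ℤ⟦X⟧)) = C ((N.choose k : ℤ)) by rw [map_natCast]]
    rw [show ((-1 : ℤ⟦X⟧)) ^ k = C ((-1)^k) by rw [map_pow, map_neg, map_one]]
    rw [mul_comm (C ((-1 : ℤ)^k) * X ^ k) (C _), ← mul_assoc, ← map_mul, coeff_C_mul, coeff_X_pow]
    by_cases hkp : p = k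
    · subst hkp; simp [mul_comm]
    · simp [hkp, Ne.symm hkp]
  rw [Finset.sum_congr rfl h]
  rcases le_or_gt p N with hp | hp
  · rw [Finset.sum_ite_eq' (range (N+1)) p]
    simp [Nat.lt_succ_of_le hp]
  · rw [Finset.sum_ite_eq' (range (N+1)) p]
    simp [Nat.choose_eq_zero_of_lt hp, Nat.lt_succ, not_le.2 hp]

private lemma key_id(N m : ℕ) :
    ∑ e ∈ range (m + 1),
        (-1 : ℤ) ^ e * N.choose e * ((N + 1 + (m - e)).choose (N + 1)) = (m : ℤ) + 1 := by
  have h2 : invOneSubPow ℤ (N + 2) = invOneSubPow ℤ N * invOneSubPow ℤ 2 := by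
    rw [invOneSubPow_eq_inv_one_sub_pow, invOneSubPow_eq_inv_one_sub_pow,
      invOneSubPow_eq_inv_one_sub_pow, ← pow_add]
  have h1 : ((1 - X) ^ N : ℤ⟦X⟧) * (invOneSubPow ℤ (N + 2)).val = (invOneSubPow ℤ 2).val := by
    rw [h2, ← invOneSubPow_inv_eq_one_sub_pow, Units.val_mul, ← mul_assoc,
      (invOneSubPow ℤ N).inv_val, one_mul]
  have h3 := congrArg (coeff m) h1
  rw [coeff_mul, invOneSubPow_val_succ_eq_mk_add_choose,
    invOneSubPow_val_succ_eq_mk_add_choose] at h3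
  simp only [coeff_mk] at h3
  rw [Finset.Nat.sum_antidiagonal_eq_sum_range_succ_mk] at h3
  simp only [coeff_one_sub_pow] at h3
  rw [Nat.choose_one_right] at h3
  exact h3.trans (by push_cast; ring)

private def Qfin(n k : ℕ) : Finset (Fin n → ℕ) :=
  (Fintype.piFinset fun _ : Fin n => Finset.range (k + 1)).filter fun q => ∑ i, q i = k

private lemma mem_Qfin {n k : ℕ} {q : Fin n → ℕ} : q ∈ Qfin n k ↔ ∑ i, q i = k := by
  simp only [Qfin, Finset.mem_filter, Fintype.mem_piFinset, Finset.mem_range, and_iff_right_iff_imp]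
  intro h i
  have h2 : q i ≤ ∑ j, q j := Finset.single_le_sum (fun j _ => Nat.zero_le _) (mem_univ i)
  omega

private lemma card_Qfin (n k : ℕ) (hn : 0 < n) :
    (Qfin n k).card = (n - 1 + k).choose (n - 1) := by
  have hnk : n + k - 1 = n - 1 + k := by omega
  have h1 : (↑(Qfin n k) : Set (Fin n → ℕ)) = {q : Fin n → ℕ | ∑ i, q i = k} := by
    ext q; simp [mem_Qfin]
  have h2 : Nat.card {q : Fin n → ℕ // ∑ i, q i = k} = (n + k - 1).choose k := by
    rw [← Nat.card_congr (Sym.equivNatSumOfFintype (Fin n) k), Nat.card_eq_fintype_card,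
      Sym.card_sym_eq_choose, Fintype.card_fin]
  have h3 : (Qfin n k).card = Nat.card {q : Fin n → ℕ // ∑ i, q i = k} := by
    rw [← Set.ncard_coe_finset, h1, ← Nat.card_coe_set_eq]
    rfl
  rw [h3, h2, hnk]
  have h4 := Nat.choose_symm (n := n - 1 + k) (k := n - 1) (Nat.le_add_right _ _)
  rw [Nat.add_sub_cancel_left] at h4
  exact h4

private def Afin(n : ℕ) (a : Fin n → ℕ) (e : ℕ) : Finset (Fin n → ℕ) :=
  (Fintype.piFinset fun i => Finset.range (a i)).filter
    fun x => (e : ℚ) + ∑ i, (x i : ℚ) / (a i) < ((n : ℚ) - 2 - ∑ i, (1 : ℚ) / (a i)) / 2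

private def Bfin (n : ℕ) (a : Fin n → ℕ) (e : ℕ) : Finset (Fin n → ℕ) :=
  (Fintype.piFinset fun i => Finset.range (n * a i)).filter
    fun x => (e : ℚ) + ∑ i, (x i : ℚ) / (a i) < ((n : ℚ) - 2 - ∑ i, (1 : ℚ) / (a i)) / 2

private lemma mem_Afin {n : ℕ} {a : Fin n → ℕ} {e : ℕ} {x : Fin n → ℕ} :
    x ∈ Afin n a e ↔ (∀ i, x i < a i) ∧
      (e : ℚ) + ∑ i, (x i : ℚ) / (a i) < ((n : ℚ) - 2 - ∑ i, (1 : ℚ) / (a i)) / 2 := by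
  simp [Afin, Fintype.mem_piFinset]

private lemma mem_Bfin {n : ℕ} {a : Fin n → ℕ} {e : ℕ} {x : Fin n → ℕ} :
    x ∈ Bfin n a e ↔ (∀ i, x i < n * a i) ∧
      (e : ℚ) + ∑ i, (x i : ℚ) / (a i) < ((n : ℚ) - 2 - ∑ i, (1 : ℚ) / (a i)) / 2 := by
  simp [Bfin, Fintype.mem_piFinset]

private lemma div_split (a x : ℕ) (h : 0 < a) :
    (x : ℚ) / a = ((x / a : ℕ) : ℚ) + ((x % a : ℕ) : ℚ) / a := by
  have ha : (a : ℚ) ≠ 0 := Nat.cast_ne_zero.2 h.ne'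
  have h1 : ((a * (x / a) + x % a : ℕ) : ℚ) = (x : ℚ) := by
    exact_mod_cast congrArg (fun t : ℕ => (t : ℚ)) (Nat.div_add_mod x a)
  push_cast at h1
  field_simp
  linarith [h1]

private lemma sum_div_split (n : ℕ) (a : Fin n → ℕ) (ha : ∀ i, 0 < a i) (x : Fin n → ℕ) :
    ∑ i, (x i : ℚ) / (a i)
      = ((∑ i, x i / a i : ℕ) : ℚ) + ∑ i, ((x i % a i : ℕ) : ℚ) / (a i) := by
  push_cast
  rw [← Finset.sum_add_distrib]
  exact Finset.sum_congr rfl fun i _ => div_split (a i) (x i) (ha i)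

private lemma mem_ineq_bound (n : ℕ) (hn : 3 ≤ n) (a : Fin n → ℕ) (ha : ∀ i, 2 ≤ a i)
    (e : ℕ) (x : Fin n → ℕ)
    (hx : (e : ℚ) + ∑ i, (x i : ℚ) / (a i) < ((n : ℚ) - 2 - ∑ i, (1 : ℚ) / (a i)) / 2) :
    ∀ i, x i < n * a i := by
  intro i
  have hai : (0 : ℚ) < a i := by exact_mod_cast Nat.lt_of_lt_of_le Nat.zero_lt_two (ha i)
  have h1 : (x i : ℚ) / a i ≤ ∑ j, (x j : ℚ) / a j :=
    Finset.single_le_sum (f := fun j => (x j : ℚ) / a j)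
      (fun j _ => by positivity) (mem_univ i)
  have h2 : (0 : ℚ) ≤ ∑ j, (1 : ℚ) / (a j) :=
    Finset.sum_nonneg fun j _ => by positivity
  have he : (0 : ℚ) ≤ (e : ℚ) := Nat.cast_nonneg e
  have hn' : (3 : ℚ) ≤ (n : ℚ) := by exact_mod_cast hn
  have h3 : (x i : ℚ) / a i < (n : ℚ) := by linarith
  have h4 : (x i : ℚ) < (n : ℚ) * a i := by
    rwa [div_lt_iff₀ hai] at h3
  exact_mod_cast h4

private lemma sum_le_s (n : ℕ) (hn : 3 ≤ n) (a : Fin n → ℕ) (ha : ∀ i, 2 ≤ a i)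
    (e d : ℕ) (h : (e : ℚ) + (d : ℚ) < ((n : ℚ) - 2 - ∑ i, (1 : ℚ) / (a i)) / 2) :
    e + d ≤ (n - 3) / 2 := by
  have hne : (univ : Finset (Fin n)).Nonempty := ⟨⟨0, by omega⟩, mem_univ _⟩
  have hpos : (0 : ℚ) < ∑ i, (1 : ℚ) / (a i) :=
    Finset.sum_pos (fun i _ => by
      have : (0:ℚ) < a i := by exact_mod_cast Nat.lt_of_lt_of_le Nat.zero_lt_two (ha i)
      positivity) hne
  have h3 : ((2 * (e + d) + 2 : ℕ) : ℚ) < (n : ℚ) := by push_cast; linarith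
  have h4 : 2 * (e + d) + 2 < n := by exact_mod_cast h3
  omega

private lemma card_B (n : ℕ) (hn : 3 ≤ n) (a : Fin n → ℕ) (ha : ∀ i, 2 ≤ a i)
    (e : ℕ) (he : e ≤ (n - 3) / 2) :
    (Bfin n a e).card
      = ∑ k ∈ range ((n - 3) / 2 + 1 - e),
          (n - 1 + k).choose (n - 1) * (Afin n a (e + k)).card := by
  have ha0 : ∀ i, 0 < a i := fun i => Nat.lt_of_lt_of_le Nat.zero_lt_two (ha i)
  have hcard : (Bfin n a e).card = (((range ((n - 3) / 2 + 1 - e)).sigma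
      (fun k => Qfin n k ×ˢ Afin n a (e + k)))).card := by
    refine Finset.card_bij'
      (fun x _ => ⟨∑ i, x i / a i, (fun i => x i / a i, fun i => x i % a i)⟩)
      (fun p _ => fun i => a i * p.2.1 i + p.2.2 i) ?_ ?_ ?_ ?_
    · -- forward membership
      intro x hx
      rw [mem_Bfin] at hx
      obtain ⟨hb, hq⟩ := hx
      have hsplit := sum_div_split n a ha0 x
      have hrnn : (0 : ℚ) ≤ ∑ i, ((x i % a i : ℕ) : ℚ) / (a i) :=
        Finset.sum_nonneg fun i _ => by
          have : (0:ℚ) < a i := by exact_mod_cast ha0 i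
          positivity
      have hed : e + (∑ i, x i / a i) ≤ (n - 3) / 2 := by
        refine sum_le_s n hn a ha e _ ?_
        rw [hsplit] at hq
        linarith
      have hmem : (∑ i, x i / a i) < (n - 3) / 2 + 1 - e := by
        have h6 : e + (∑ i, x i / a i) < (n - 3) / 2 + 1 := Nat.lt_succ_of_le hed
        exact Nat.lt_sub_of_add_lt (by rwa [add_comm] at h6)
      rw [Finset.mem_sigma, Finset.mem_product]
      refine ⟨Finset.mem_range.2 hmem, mem_Qfin.2 rfl, mem_Afin.2 ⟨?_, ?_⟩⟩
      · exact fun i => Nat.mod_lt _ (ha0 i)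
      · rw [hsplit] at hq
        push_cast at hq ⊢
        linarith
    · -- backward membership
      rintro ⟨k, q, r⟩ hp
      rw [Finset.mem_sigma, Finset.mem_product] at hp
      obtain ⟨hk, hq, hr⟩ := hp
      dsimp only at hk hq hr
      rw [mem_Qfin] at hq
      rw [mem_Afin] at hr
      obtain ⟨hr1, hr2⟩ := hr
      have hsum : ∑ i, ((a i * q i + r i : ℕ) : ℚ) / (a i)
          = (k : ℚ) + ∑ i, (r i : ℚ) / (a i) := by
        rw [← hq]
        push_cast
        rw [← Finset.sum_add_distrib]
        refine Finset.sum_congr rfl fun i _ => ?_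
        have hai : (a i : ℚ) ≠ 0 := Nat.cast_ne_zero.2 (ha0 i).ne'
        field_simp
      have hineq : (e : ℚ) + ∑ i, ((a i * q i + r i : ℕ) : ℚ) / (a i)
          < ((n : ℚ) - 2 - ∑ i, (1 : ℚ) / (a i)) / 2 := by
        rw [hsum]
        push_cast at hr2 ⊢
        linarith
      rw [mem_Bfin]
      exact ⟨mem_ineq_bound n hn a ha e _ hineq, hineq⟩
    · -- left inverse
      intro x _
      funext i
      exact Nat.div_add_mod (x i) (a i)
    · -- right inverse
      rintro ⟨k, q, r⟩ hp
      rw [Finset.mem_sigma, Finset.mem_product] at hp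
      obtain ⟨hk, hq, hr⟩ := hp
      dsimp only at hk hq hr
      rw [mem_Qfin] at hq
      rw [mem_Afin] at hr
      have hdiv : ∀ i, (a i * q i + r i) / a i = q i := fun i => by
        rw [Nat.mul_add_div (ha0 i), Nat.div_eq_of_lt (hr.1 i), add_zero]
      have hmod : ∀ i, (a i * q i + r i) % a i = r i := fun i => by
        rw [Nat.mul_add_mod, Nat.mod_eq_of_lt (hr.1 i)]
      simp only [hdiv, hmod, hq]
  rw [hcard, Finset.card_sigma]
  exact Finset.sum_congr rfl fun k _ => by
    rw [Finset.card_product, card_Qfin n k (by omega)]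


/-- With `s = ⌊(n−3)/2⌋`, `A_e` the restricted and `B_e` the unrestricted
lattice-point sets,
`∑_{e=0}^{s} (e+1)|A_e| = ∑_{e=0}^{s} (−1)^e C(n−2, e) |B_e|`. -/
theorem stmt_13 (n : ℕ) (hn : 3 ≤ n) (a : Fin n → ℕ) (ha : ∀ i, 2 ≤ a i)
    (hco : ∀ i j, i ≠ j → Nat.Coprime (a i) (a j)) :
    ∑ e ∈ Finset.range ((n - 3) / 2 + 1),
        ((e : ℤ) + 1) *
          ({x : Fin n → ℕ | (∀ i, x i < a i) ∧
            (e : ℚ) + ∑ i, (x i : ℚ) / (a i)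
              < ((n : ℚ) - 2 - ∑ i, (1 : ℚ) / (a i)) / 2}.ncard : ℤ)
      = ∑ e ∈ Finset.range ((n - 3) / 2 + 1),
          (-1 : ℤ) ^ e * (n - 2).choose e *
            ({x : Fin n → ℕ |
              (e : ℚ) + ∑ i, (x i : ℚ) / (a i)
                < ((n : ℚ) - 2 - ∑ i, (1 : ℚ) / (a i)) / 2}.ncard : ℤ) := by
  have hN1 : n - 1 = (n - 2) + 1 := by omega
  have hAset : ∀ e : ℕ, {x : Fin n → ℕ | (∀ i, x i < a i) ∧
      (e : ℚ) + ∑ i, (x i : ℚ) / (a i) < ((n : ℚ) - 2 - ∑ i, (1 : ℚ) / (a i)) / 2}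
      = ↑(Afin n a e) := by
    intro e
    ext x
    simp only [Set.mem_setOf_eq, Finset.mem_coe, mem_Afin]
  have hBset : ∀ e : ℕ, {x : Fin n → ℕ |
      (e : ℚ) + ∑ i, (x i : ℚ) / (a i) < ((n : ℚ) - 2 - ∑ i, (1 : ℚ) / (a i)) / 2}
      = ↑(Bfin n a e) := by
    intro e
    ext x
    simp only [Set.mem_setOf_eq, Finset.mem_coe, mem_Bfin]
    exact ⟨fun h => ⟨mem_ineq_bound n hn a ha e x h, h⟩, fun h => h.2⟩
  calc
    ∑ e ∈ Finset.range ((n - 3) / 2 + 1),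
        ((e : ℤ) + 1) *
          ({x : Fin n → ℕ | (∀ i, x i < a i) ∧
            (e : ℚ) + ∑ i, (x i : ℚ) / (a i)
              < ((n : ℚ) - 2 - ∑ i, (1 : ℚ) / (a i)) / 2}.ncard : ℤ)
      = ∑ m ∈ Finset.range ((n - 3) / 2 + 1),
          ((m : ℤ) + 1) * ((Afin n a m).card : ℤ) := by
        refine Finset.sum_congr rfl fun e _ => ?_
        rw [hAset e, Set.ncard_coe_finset]
    _ = ∑ m ∈ Finset.range ((n - 3) / 2 + 1),
          (∑ e ∈ Finset.range (m + 1), (-1 : ℤ) ^ e * ((n - 2).choose e : ℤ) *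
            (((n - 2) + 1 + (m - e)).choose ((n - 2) + 1) : ℤ)) *
          ((Afin n a m).card : ℤ) := by
        refine Finset.sum_congr rfl fun m _ => ?_
        rw [key_id (n - 2) m]
    _ = ∑ m ∈ Finset.Ico 0 ((n - 3) / 2 + 1), ∑ e ∈ Finset.Ico 0 (m + 1),
          (-1 : ℤ) ^ e * ((n - 2).choose e : ℤ) *
            ((n - 1 + (m - e)).choose (n - 1) : ℤ) * ((Afin n a m).card : ℤ) := by
        rw [← Finset.range_eq_Ico]
        refine Finset.sum_congr rfl fun m _ => ?_
        rw [← Finset.sum_mul, hN1, ← Finset.range_eq_Ico]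
    _ = ∑ e ∈ Finset.Ico 0 ((n - 3) / 2 + 1), ∑ m ∈ Finset.Ico e ((n - 3) / 2 + 1),
          (-1 : ℤ) ^ e * ((n - 2).choose e : ℤ) *
            ((n - 1 + (m - e)).choose (n - 1) : ℤ) * ((Afin n a m).card : ℤ) :=
        (Finset.sum_Ico_Ico_comm 0 ((n - 3) / 2 + 1) _).symm
    _ = ∑ e ∈ Finset.range ((n - 3) / 2 + 1),
          (-1 : ℤ) ^ e * ((n - 2).choose e : ℤ) * ((Bfin n a e).card : ℤ) := by
        rw [← Finset.range_eq_Ico]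
        refine Finset.sum_congr rfl fun e he => ?_
        rw [Finset.mem_range] at he
        rw [card_B n hn a ha e (by omega)]
        rw [Finset.sum_Ico_eq_sum_range]
        push_cast
        rw [Finset.mul_sum]
        refine Finset.sum_congr rfl fun k _ => ?_
        rw [show e + k - e = k by omega]
        ring
    _ = ∑ e ∈ Finset.range ((n - 3) / 2 + 1),
          (-1 : ℤ) ^ e * (n - 2).choose e *
            ({x : Fin n → ℕ |
              (e : ℚ) + ∑ i, (x i : ℚ) / (a i)
                < ((n : ℚ) - 2 - ∑ i, (1 : ℚ) / (a i)) / 2}.ncard : ℤ) := by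
        refine Finset.sum_congr rfl fun e _ => ?_
        rw [hBset e, Set.ncard_coe_finset]
end

section
/- Let p, q be coprime positive integers, and let S_{p,q} = {ap+bq : a, b ∈ ℤ, a ≥ 0, b ≥ 0} be the numerical semigroup generated by p and q. For any integer 0 ≤ α < pq, the number of integers s ∉ S_{p,q} with s ≥ α equals the number of pairs (i,j) of integers with 0 < i < p, 0 < j < q and 1 + α/(pq) ≤ i/p + j/q < 2. -/
/-- For coprime `p,q` with `q > 0`, every residue mod `q` is of the form `j*p`. -/
lemma aux_mod15 (p q s : ℕ) (hq : 0 < q) (hco : Nat.Coprime p q) :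
    ∃ j < q, j * p ≡ s [MOD q] := by
  haveI : NeZero q := ⟨hq.ne'⟩
  refine ⟨((s : ZMod q) * (p : ZMod q)⁻¹).val, ZMod.val_lt _, ?_⟩
  rw [← ZMod.natCast_eq_natCast_iff]
  push_cast
  rw [ZMod.natCast_val, ZMod.cast_id, mul_assoc,
    mul_comm ((p : ZMod q)⁻¹) (p : ZMod q), ZMod.coe_mul_inv_eq_one p hco, mul_one]

/-- Every `s ≥ p*q` is representable. -/
lemma aux_rep15 (p q s : ℕ) (hp : 0 < p) (hq : 0 < q) (hco : Nat.Coprime p q)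
    (hs : p * q ≤ s) : ∃ a b : ℕ, s = a * p + b * q := by
  obtain ⟨j, hj, hmod⟩ := aux_mod15 p q s hq hco
  have hlt : j * p < p * q := by
    calc j * p < q * p := (Nat.mul_lt_mul_right hp).mpr hj
    _ = p * q := Nat.mul_comm q p
  have hle : j * p ≤ s := le_of_lt (lt_of_lt_of_le hlt hs)
  obtain ⟨c, hc⟩ := (Nat.modEq_iff_dvd' hle).mp hmod
  exact ⟨j, c, by rw [Nat.mul_comm c q]; omega⟩

/-- For coprime positive `p, q` and `0 ≤ α < pq`, the number of gaps `s ∉ S_{p,q}`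
with `s ≥ α` equals the number of pairs `0 < i < p`, `0 < j < q` with
`1 + α/(pq) ≤ i/p + j/q < 2`. -/
theorem stmt_15 (p q : ℕ) (hp : 0 < p) (hq : 0 < q) (hco : Nat.Coprime p q)
    (α : ℕ) (hα : α < p * q) :
    {s : ℕ | (¬∃ a b : ℕ, s = a * p + b * q) ∧ α ≤ s}.ncard
      = {ij : ℕ × ℕ | 0 < ij.1 ∧ ij.1 < p ∧ 0 < ij.2 ∧ ij.2 < q ∧
          1 + (α : ℚ) / (p * q) ≤ (ij.1 : ℚ) / p + (ij.2 : ℚ) / q ∧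
          (ij.1 : ℚ) / p + (ij.2 : ℚ) / q < 2}.ncard := by
  have hp' : (0:ℚ) < p := by exact_mod_cast hp
  have hq' : (0:ℚ) < q := by exact_mod_cast hq
  have hpq' : (0:ℚ) < ((p*q : ℕ) : ℚ) := by push_cast; positivity
  -- Rational conditions in terms of naturals
  have hA : ∀ i j : ℕ,
      ((1 + (α : ℚ) / (p * q) ≤ (i : ℚ) / p + (j : ℚ) / q) ∧
        ((i : ℚ) / p + (j : ℚ) / q < 2)) ↔
      (p * q + α ≤ i * q + j * p ∧ i * q + j * p < 2 * (p * q)) := by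
    intro i j
    have e1 : (i:ℚ)/p + (j:ℚ)/q = ((i*q + j*p : ℕ):ℚ)/((p*q:ℕ):ℚ) := by
      push_cast; field_simp
    have e2 : 1 + (α:ℚ)/((p:ℚ)*(q:ℚ)) = ((p*q + α : ℕ):ℚ)/((p*q:ℕ):ℚ) := by
      push_cast; field_simp
    have e3 : (2:ℚ) = ((2*(p*q):ℕ):ℚ)/((p*q:ℕ):ℚ) := by
      push_cast; field_simp
    rw [e1, e2, e3, div_le_div_iff_of_pos_right hpq', div_lt_div_iff_of_pos_right hpq', Nat.cast_le, Nat.cast_lt]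
  -- upper bound for pairs
  have hbound : ∀ i j : ℕ, i < p → j < q → i * q + j * p + p + q ≤ 2 * (p * q) := by
    intro i j hi hj
    have h1 : (i+1) * q ≤ p * q := Nat.mul_le_mul_right q hi
    have h2 : (j+1) * p ≤ q * p := Nat.mul_le_mul_right p hj
    have h3 : q * p = p * q := Nat.mul_comm q p
    nlinarith
  set f : ℕ × ℕ → ℕ := fun ij => ij.1 * q + ij.2 * p - p * q with hf
  set A : Set (ℕ × ℕ) := {ij : ℕ × ℕ | 0 < ij.1 ∧ ij.1 < p ∧ 0 < ij.2 ∧ ij.2 < q ∧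
          1 + (α : ℚ) / (p * q) ≤ (ij.1 : ℚ) / p + (ij.2 : ℚ) / q ∧
          (ij.1 : ℚ) / p + (ij.2 : ℚ) / q < 2} with hAdef
  -- membership in A, natural form
  have hAmem : ∀ i j : ℕ, (i, j) ∈ A ↔
      (0 < i ∧ i < p ∧ 0 < j ∧ j < q ∧ p * q + α ≤ i * q + j * p) := by
    intro i j
    constructor
    · rintro ⟨h1, h2, h3, h4, h5, h6⟩
      exact ⟨h1, h2, h3, h4, ((hA i j).mp ⟨h5, h6⟩).1⟩
    · rintro ⟨h1, h2, h3, h4, h5⟩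
      have h6 : i * q + j * p < 2 * (p * q) := by
        have := hbound i j h2 h4; omega
      obtain ⟨h5', h6'⟩ := (hA i j).mpr ⟨h5, h6⟩
      exact ⟨h1, h2, h3, h4, h5', h6'⟩
  -- the gap set equals the image of A under f
  have himage : {s : ℕ | (¬∃ a b : ℕ, s = a * p + b * q) ∧ α ≤ s} = f '' A := by
    ext s
    simp only [Set.mem_setOf_eq, Set.mem_image, Prod.exists]
    constructor
    · rintro ⟨hrep, hαs⟩
      have hlt : s < p * q := by
        by_contra h
        exact hrep (aux_rep15 p q s hp hq hco (le_of_not_gt h))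
      obtain ⟨j, hj, hjmod⟩ := aux_mod15 p q s hq hco
      obtain ⟨i, hi, himod⟩ := aux_mod15 q p s hp hco.symm
      have hj0 : 0 < j := by
        rcases Nat.eq_zero_or_pos j with h | h
        · exfalso
          have hdvd : q ∣ s := by
            apply Nat.modEq_zero_iff_dvd.mp
            have := hjmod.symm; rw [h, Nat.zero_mul] at this; exact this
          exact hrep ⟨0, s / q, by rw [Nat.div_mul_cancel hdvd]; ring⟩
        · exact h
      have hi0 : 0 < i := by
        rcases Nat.eq_zero_or_pos i with h | h
        · exfalso
          have hdvd : p ∣ s := by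
            apply Nat.modEq_zero_iff_dvd.mp
            have := himod.symm; rw [h, Nat.zero_mul] at this; exact this
          exact hrep ⟨s / p, 0, by rw [Nat.div_mul_cancel hdvd]; ring⟩
        · exact h
      -- x = i*q + j*p ≡ s mod p*q
      have hxp : i * q + j * p ≡ s [MOD p] := by
        have h0 : j * p ≡ 0 [MOD p] := Nat.modEq_zero_iff_dvd.mpr ⟨j, Nat.mul_comm j p⟩
        simpa using himod.add h0
      have hxq : i * q + j * p ≡ s [MOD q] := by
        have h0 : i * q ≡ 0 [MOD q] := Nat.modEq_zero_iff_dvd.mpr ⟨i, Nat.mul_comm i q⟩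
        have := h0.add hjmod
        simpa using this
      have hx : i * q + j * p ≡ s [MOD p * q] :=
        (Nat.modEq_and_modEq_iff_modEq_mul hco).mp ⟨hxp, hxq⟩
      have hx2 : i * q + j * p < 2 * (p * q) := by
        have := hbound i j hi hj; omega
      have hkey : i * q + j * p = s + p * q := by
        have hmods : (i * q + j * p) % (p * q) = s := by
          have := hx; unfold Nat.ModEq at this
          rw [this, Nat.mod_eq_of_lt hlt]
        rcases Nat.lt_or_ge (i * q + j * p) (p * q) with h | h
        · exfalso
          have : i * q + j * p = s := by rw [← hmods, Nat.mod_eq_of_lt h]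
          exact hrep ⟨j, i, by omega⟩
        · have h1 : (i * q + j * p) % (p * q) = (i * q + j * p - p * q) % (p * q) :=
            Nat.mod_eq_sub_mod h
          have h2 : i * q + j * p - p * q < p * q := by omega
          rw [h1, Nat.mod_eq_of_lt h2] at hmods
          omega
      refine ⟨i, j, ?_, ?_⟩
      · rw [hAmem]; exact ⟨hi0, hi, hj0, hj, by omega⟩
      · show i * q + j * p - p * q = s
        omega
    · rintro ⟨i, j, hmem, hfs⟩
      rw [hAmem] at hmem
      obtain ⟨hi0, hi, hj0, hj, hge⟩ := hmem
      have hs : s = i * q + j * p - p * q := hfs.symm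
      have hseq : s + p * q = i * q + j * p := by omega
      constructor
      · rintro ⟨a, b, hab⟩
        have heq : a * p + b * q + p * q = i * q + j * p := by omega
        -- mod q : a*p ≡ j*p
        have h1 : a * p ≡ j * p [MOD q] := by
          rw [Nat.modEq_iff_dvd]
          refine ⟨(b:ℤ) + p - i, ?_⟩
          have hz : (a:ℤ) * p + b * q + p * q = i * q + j * p := by exact_mod_cast heq
          push_cast
          linear_combination -hz
        have h2 : a ≡ j [MOD q] := Nat.ModEq.cancel_right_of_coprime hco.symm h1
        have hap : a * p < p * q := by
          have hb := hbound i j hi hj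
          omega
        have haq : a < q := by
          by_contra h
          have : q * p ≤ a * p := Nat.mul_le_mul_right p (le_of_not_gt h)
          have h3 : q * p = p * q := Nat.mul_comm q p
          omega
        have haj : a = j := by
          have := h2; unfold Nat.ModEq at this
          rw [Nat.mod_eq_of_lt haq, Nat.mod_eq_of_lt hj] at this
          exact this
        subst haj
        have h4 : (b + p) * q = i * q := by
          have : b * q + p * q = i * q := by omega
          linarith [Nat.add_mul b p q]
        have h5 : b + p = i := Nat.eq_of_mul_eq_mul_right hq h4
        omega
      · omega
  rw [himage]
  apply Set.ncard_image_of_injOn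
  rintro ⟨i1, j1⟩ h1 ⟨i2, j2⟩ h2 hfeq
  rw [hAmem] at h1 h2
  obtain ⟨hi10, hi1, hj10, hj1, hge1⟩ := h1
  obtain ⟨hi20, hi2, hj20, hj2, hge2⟩ := h2
  simp only [hf] at hfeq
  have hxeq : i1 * q + j1 * p = i2 * q + j2 * p := by omega
  have h1' : i1 * q ≡ i2 * q [MOD p] := by
    rw [Nat.modEq_iff_dvd]
    refine ⟨(j1:ℤ) - j2, ?_⟩
    have hz : (i1:ℤ) * q + j1 * p = i2 * q + j2 * p := by exact_mod_cast hxeq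
    push_cast
    linear_combination -hz
  have h2' : i1 ≡ i2 [MOD p] := Nat.ModEq.cancel_right_of_coprime hco h1'
  have hii : i1 = i2 := by
    have := h2'; unfold Nat.ModEq at this
    rw [Nat.mod_eq_of_lt hi1, Nat.mod_eq_of_lt hi2] at this
    exact this
  subst hii
  have hjp : j1 * p = j2 * p := by omega
  have hjj : j1 = j2 := Nat.eq_of_mul_eq_mul_right hp hjp
  simp [hjj]
end

section
/- Let p, q be coprime positive integers. The number of gaps of the semigroup S_{p,q} = {ap+bq : a,b ≥ 0} that are at least (p−1)(q−1)/2 equals the number of pairs (i,j) of integers with 0 < i < p, 0 < j < q and i/p + j/q ≤ (pq + p + q − 1)/(2pq). -/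
/-- Injectivity of `(i,j) ↦ i*q + j*p` on the box `(0,p) × (0,q)`. -/
lemma stmt_16_box_inj (p q : ℕ) (hp : 0 < p) (hco : Nat.Coprime p q)
    {i j i' j' : ℕ} (hip : i < p) (hi'p : i' < p)
    (h : i * q + j * p = i' * q + j' * p) : i = i' ∧ j = j' := by
  have h1 : i * q % p = i' * q % p := by
    have := congrArg (· % p) h
    simpa [Nat.add_mul_mod_self_right] using this
  have h2 : i % p = i' % p := Nat.ModEq.cancel_right_of_coprime hco h1
  rw [Nat.mod_eq_of_lt hip, Nat.mod_eq_of_lt hi'p] at h2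
  subst h2
  have h3 : j * p = j' * p := Nat.add_left_cancel h
  exact ⟨rfl, Nat.eq_of_mul_eq_mul_right hp h3⟩

/-- The main combinatorial identity, stated with natural-number inequalities. -/
lemma stmt_16_main (p q : ℕ) (hp2 : 2 ≤ p) (hq2 : 2 ≤ q) (hco : Nat.Coprime p q) :
    {s : ℕ | (¬∃ a b : ℕ, s = a * p + b * q) ∧ (p - 1) * (q - 1) ≤ 2 * s}.ncard
      = {ij : ℕ × ℕ | 0 < ij.1 ∧ ij.1 < p ∧ 0 < ij.2 ∧ ij.2 < q ∧
          2 * (ij.1 * q + ij.2 * p) ≤ p * q + p + q - 1}.ncard := by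
  have hp : 0 < p := by omega
  have hq : 0 < q := by omega
  have hp1 : 1 ≤ p := hp
  have hq1 : 1 ≤ q := hq
  -- p + q ≤ p*q
  have h2p : 2 * p ≤ q * p := Nat.mul_le_mul_right p hq2
  have h2q : 2 * q ≤ p * q := Nat.mul_le_mul_right q hp2
  have hkey : p + q ≤ p * q := by
    have hc : q * p = p * q := Nat.mul_comm q p
    linarith
  have hone : 1 ≤ p * q + p + q := by linarith [Nat.zero_le (p * q)]
  set L := {s : ℕ | (¬∃ a b : ℕ, s = a * p + b * q) ∧ (p - 1) * (q - 1) ≤ 2 * s} with hL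
  set B := {ij : ℕ × ℕ | 0 < ij.1 ∧ ij.1 < p ∧ 0 < ij.2 ∧ ij.2 < q ∧
      2 * (ij.1 * q + ij.2 * p) ≤ p * q + p + q - 1} with hB
  set f : ℕ × ℕ → ℕ := fun ij => p * q - (ij.1 * q + ij.2 * p) with hf
  have himg : f '' B = L := by
    apply Set.Subset.antisymm
    · -- image ⊆ L
      rintro s ⟨⟨i, j⟩, ⟨hi0, hip, hj0, hjq, hcond⟩, rfl⟩
      have hcond' : 2 * (i * q + j * p) + 1 ≤ p * q + p + q :=
        (Nat.le_sub_iff_add_le hone).mp hcond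
      have hXlt : i * q + j * p < p * q := by linarith
      have hs : i * q + j * p + (p * q - (i * q + j * p)) = p * q :=
        Nat.add_sub_cancel' hXlt.le
      constructor
      · -- not representable
        rintro ⟨a, b, hab⟩
        simp only [hf] at hab
        rw [hab] at hs
        have hEq : (j + a) * p + (i + b) * q = p * q := by
          calc (j + a) * p + (i + b) * q = i * q + j * p + (a * p + b * q) := by ring
            _ = p * q := hs
        have hdvd : p ∣ (i + b) * q := by
          have hd1 : p ∣ (j + a) * p + (i + b) * q := hEq ▸ dvd_mul_right p q
          exact (Nat.dvd_add_right (dvd_mul_left p (j + a))).mp hd1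
        obtain ⟨c, hc⟩ := hco.dvd_of_dvd_mul_right hdvd
        have hc1 : 1 ≤ c := by
          rcases Nat.eq_zero_or_pos c with h0 | h; · simp [h0] at hc; omega
          exact h
        rw [hc] at hEq
        have hge : p * 1 * q ≤ p * c * q :=
          Nat.mul_le_mul_right q (Nat.mul_le_mul_left p hc1)
        have hja : 1 * p ≤ (j + a) * p := Nat.mul_le_mul_right p (by omega)
        have hp1q : p * 1 * q = p * q := by ring
        have h1p : 1 * p = p := by ring
        have hpcq : (p * c) * q = p * c * q := rfl
        linarith
      · -- size inequality
        simp only [hf]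
        zify [hp1, hq1, hXlt.le]
        zify at hcond'
        linarith
    · -- L ⊆ image
      rintro s ⟨hgap, h2⟩
      haveI : NeZero p := ⟨by omega⟩
      have hps : ¬ p ∣ s := by rintro ⟨k, rfl⟩; exact hgap ⟨k, 0, by ring⟩
      have hqunit : IsUnit (q : ZMod p) := (ZMod.isUnit_iff_coprime q p).mpr hco.symm
      set u : ZMod p := -(s : ZMod p) * (q : ZMod p)⁻¹ with hu
      set i := u.val with hi
      have hdvd : p ∣ i * q + s := by
        have h0 : ((i * q + s : ℕ) : ZMod p) = 0 := by
          push_cast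
          rw [hi, ZMod.natCast_val, ZMod.cast_id, hu, mul_assoc,
            ZMod.inv_mul_of_unit _ hqunit, mul_one]
          ring
        exact (ZMod.natCast_eq_zero_iff _ _).mp h0
      have hilt : i < p := ZMod.val_lt u
      have hipos : 0 < i := by
        rcases Nat.eq_zero_or_pos i with h0 | h
        · exfalso; apply hps; simpa [h0] using hdvd
        · exact h
      obtain ⟨t, ht⟩ := hdvd
      have ht' : (i : ℤ) * q + s = p * t := by exact_mod_cast ht
      have htq : t < q := by
        by_contra hge
        push_neg at hge
        apply hgap
        refine ⟨t - q, p - i, ?_⟩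
        zify [hge, hilt.le]
        linarith
      have htpos : 0 < t := by
        have hpos : 0 < i * q + s :=
          Nat.lt_of_lt_of_le (Nat.mul_pos hipos hq) (Nat.le_add_right _ _)
        rcases Nat.eq_zero_or_pos t with h0 | h
        · rw [h0, Nat.mul_zero] at ht; exact absurd ht hpos.ne'
        · exact h
      refine ⟨(i, q - t), ⟨hipos, hilt, by omega, by omega, ?_⟩, ?_⟩
      · -- size condition
        have h5 : i * q + (q - t) * p + s = p * q := by
          zify [htq.le]; linarith
        zify [hone, hp1, hq1] at h2 ⊢
        zify at h5
        linarith
      · -- f (i, q-t) = s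
        simp only [hf]
        have h5 : i * q + (q - t) * p + s = p * q := by
          zify [htq.le]; linarith
        rw [← h5]
        exact Nat.add_sub_cancel_left _ _
  have hinj : Set.InjOn f B := by
    rintro ⟨i, j⟩ ⟨hi0, hip, hj0, hjq, hcond⟩ ⟨i', j'⟩ ⟨hi'0, hi'p, hj'0, hj'q, hcond'⟩ heq
    simp only [hf] at heq
    have hc1 : 2 * (i * q + j * p) + 1 ≤ p * q + p + q :=
      (Nat.le_sub_iff_add_le hone).mp hcond
    have hc2 : 2 * (i' * q + j' * p) + 1 ≤ p * q + p + q :=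
      (Nat.le_sub_iff_add_le hone).mp hcond'
    have hX1 : i * q + j * p ≤ p * q := by linarith
    have hX2 : i' * q + j' * p ≤ p * q := by linarith
    have hXX : i * q + j * p = i' * q + j' * p := by
      have e1 := Nat.sub_sub_self hX1
      have e2 := Nat.sub_sub_self hX2
      rw [← e1, ← e2, heq]
    obtain ⟨hii, hjj⟩ := stmt_16_box_inj p q hp hco hip hi'p hXX
    exact Prod.ext hii hjj
  rw [← himg, Set.ncard_image_of_injOn hinj]

/-- For coprime positive `p, q`, the number of gaps of `S_{p,q}` that are at least
`(p−1)(q−1)/2` equals the number of pairs `0 < i < p`, `0 < j < q` with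
`i/p + j/q ≤ (pq + p + q − 1)/(2pq)`. -/
theorem stmt_16 (p q : ℕ) (hp : 0 < p) (hq : 0 < q) (hco : Nat.Coprime p q) :
    {s : ℕ | (¬∃ a b : ℕ, s = a * p + b * q) ∧
        ((p : ℚ) - 1) * ((q : ℚ) - 1) / 2 ≤ (s : ℚ)}.ncard
      = {ij : ℕ × ℕ | 0 < ij.1 ∧ ij.1 < p ∧ 0 < ij.2 ∧ ij.2 < q ∧
          (ij.1 : ℚ) / p + (ij.2 : ℚ) / q
            ≤ ((p : ℚ) * q + p + q - 1) / (2 * p * q)}.ncard := by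
  -- degenerate cases p = 1 or q = 1
  rcases eq_or_lt_of_le (Nat.one_le_iff_ne_zero.mpr hp.ne') with hp1 | hp2
  · have hLe : {s : ℕ | (¬∃ a b : ℕ, s = a * p + b * q) ∧
        ((p : ℚ) - 1) * ((q : ℚ) - 1) / 2 ≤ (s : ℚ)} = ∅ := by
      ext s
      simp only [Set.mem_setOf_eq, Set.mem_empty_iff_false, iff_false, not_and]
      intro hgap
      exact absurd ⟨s, 0, by rw [← hp1]; ring⟩ hgap
    have hBe : {ij : ℕ × ℕ | 0 < ij.1 ∧ ij.1 < p ∧ 0 < ij.2 ∧ ij.2 < q ∧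
          (ij.1 : ℚ) / p + (ij.2 : ℚ) / q
            ≤ ((p : ℚ) * q + p + q - 1) / (2 * p * q)} = ∅ := by
      ext ij
      simp only [Set.mem_setOf_eq, Set.mem_empty_iff_false, iff_false, not_and]
      intro h1 h2
      exfalso; omega
    rw [hLe, hBe, Set.ncard_empty, Set.ncard_empty]
  · rcases eq_or_lt_of_le (Nat.one_le_iff_ne_zero.mpr hq.ne') with hq1 | hq2
    · have hLe : {s : ℕ | (¬∃ a b : ℕ, s = a * p + b * q) ∧
          ((p : ℚ) - 1) * ((q : ℚ) - 1) / 2 ≤ (s : ℚ)} = ∅ := by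
        ext s
        simp only [Set.mem_setOf_eq, Set.mem_empty_iff_false, iff_false, not_and]
        intro hgap
        exact absurd ⟨0, s, by rw [← hq1]; ring⟩ hgap
      have hBe : {ij : ℕ × ℕ | 0 < ij.1 ∧ ij.1 < p ∧ 0 < ij.2 ∧ ij.2 < q ∧
            (ij.1 : ℚ) / p + (ij.2 : ℚ) / q
              ≤ ((p : ℚ) * q + p + q - 1) / (2 * p * q)} = ∅ := by
        ext ij
        simp only [Set.mem_setOf_eq, Set.mem_empty_iff_false, iff_false, not_and]
        intro h1 h2 h3 h4
        exfalso; omega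
      rw [hLe, hBe, Set.ncard_empty, Set.ncard_empty]
    · -- main case: p, q ≥ 2
      have hp' : (0 : ℚ) < p := by exact_mod_cast hp
      have hq' : (0 : ℚ) < q := by exact_mod_cast hq
      have hone : 1 ≤ p * q + p + q := by
        linarith [Nat.zero_le (p * q), Nat.one_le_iff_ne_zero.mpr hp.ne']
      have hLeq : {s : ℕ | (¬∃ a b : ℕ, s = a * p + b * q) ∧
          ((p : ℚ) - 1) * ((q : ℚ) - 1) / 2 ≤ (s : ℚ)}
          = {s : ℕ | (¬∃ a b : ℕ, s = a * p + b * q) ∧ (p - 1) * (q - 1) ≤ 2 * s} := by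
        ext s
        simp only [Set.mem_setOf_eq]
        refine and_congr_right fun _ => ?_
        rw [div_le_iff₀ (by norm_num : (0:ℚ) < 2),
          show ((p:ℚ) - 1) * ((q:ℚ) - 1) = (((p - 1) * (q - 1) : ℕ) : ℚ) by
            push_cast [Nat.cast_sub hp, Nat.cast_sub hq]; ring,
          show (s:ℚ) * 2 = ((2 * s : ℕ) : ℚ) by push_cast; ring,
          Nat.cast_le]
      have hBeq : {ij : ℕ × ℕ | 0 < ij.1 ∧ ij.1 < p ∧ 0 < ij.2 ∧ ij.2 < q ∧
            (ij.1 : ℚ) / p + (ij.2 : ℚ) / q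
              ≤ ((p : ℚ) * q + p + q - 1) / (2 * p * q)}
          = {ij : ℕ × ℕ | 0 < ij.1 ∧ ij.1 < p ∧ 0 < ij.2 ∧ ij.2 < q ∧
            2 * (ij.1 * q + ij.2 * p) ≤ p * q + p + q - 1} := by
        ext ⟨i, j⟩
        simp only [Set.mem_setOf_eq]
        refine and_congr_right fun _ => and_congr_right fun _ =>
          and_congr_right fun _ => and_congr_right fun _ => ?_
        rw [div_add_div _ _ hp'.ne' hq'.ne',
          div_le_div_iff₀ (by positivity) (by positivity),
          show ((i:ℚ) * q + p * j) * (2 * p * q)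
              = ((2 * (i * q + j * p) : ℕ) : ℚ) * ((p:ℚ) * q) by push_cast; ring,
          mul_le_mul_iff_of_pos_right (by positivity : (0:ℚ) < (p:ℚ) * q),
          show ((p:ℚ) * q + p + q - 1) = (((p * q + p + q - 1 : ℕ)) : ℚ) by
            push_cast [Nat.cast_sub hone]; ring,
          Nat.cast_le]
      rw [hLeq, hBeq]
      exact stmt_16_main p q hp2 hq2 hco
end

section
/- Let a₁, …, aₙ be pairwise coprime positive integers, a = a₁⋯aₙ, and qᵢ = a/aᵢ. For any integer e ≥ 0, the number of nonnegative integer solutions (x₁,…,xₙ,x_{n+1}) of Σᵢ xᵢqᵢ + x_{n+1} = −ea + ⌊((n−2)a − Σᵢ qᵢ − 1)/2⌋ equals the number of nonnegative integer solutions (x₁,…,xₙ) of the inequality Σᵢ xᵢ/aᵢ < −e + (n − 2 − Σᵢ 1/aᵢ)/2. -/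
/-- For pairwise coprime positive `a₁, …, aₙ`, `a = a₁⋯aₙ`, `qᵢ = a/aᵢ`, and any
integer `e ≥ 0`, the number of nonnegative integer solutions `(x₁,…,xₙ,y)` of
`∑ xᵢqᵢ + y = −ea + ⌊((n−2)a − ∑ qᵢ − 1)/2⌋` equals the number of nonnegative
integer solutions `(x₁,…,xₙ)` of `∑ xᵢ/aᵢ < −e + (n − 2 − ∑ 1/aᵢ)/2`. -/
theorem stmt_19 (n : ℕ) (a : Fin n → ℕ) (ha : ∀ i, 0 < a i)
    (hco : ∀ i j, i ≠ j → Nat.Coprime (a i) (a j)) (e : ℕ) :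
    {xy : (Fin n → ℕ) × ℕ |
        (∑ i, (xy.1 i : ℤ) * ((∏ j, a j) / a i : ℕ)) + (xy.2 : ℤ)
          = -(e : ℤ) * (∏ j, a j : ℕ)
            + ⌊(((n : ℚ) - 2) * (∏ j, a j : ℕ)
                - (∑ i, (((∏ j, a j) / a i : ℕ) : ℚ)) - 1) / 2⌋}.ncard
      = {x : Fin n → ℕ |
          ∑ i, (x i : ℚ) / (a i)
            < -(e : ℚ) + ((n : ℚ) - 2 - ∑ i, (1 : ℚ) / (a i)) / 2}.ncard := by
  classical
  set A : ℕ := ∏ j, a j with hA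
  have hAdvd : ∀ i, a i ∣ A := fun i => Finset.dvd_prod_of_mem a (Finset.mem_univ i)
  have hApos : 0 < A := Finset.prod_pos (fun i _ => ha i)
  have hApos' : (0 : ℚ) < (A : ℚ) := by exact_mod_cast hApos
  have hq : ∀ i, ((A / a i : ℕ) : ℚ) * (a i : ℚ) = (A : ℚ) := by
    intro i
    rw [← Nat.cast_mul, Nat.div_mul_cancel (hAdvd i)]
  set Q : ℤ := ∑ i, ((A / a i : ℕ) : ℤ) with hQ
  set m : ℤ := ((n : ℤ) - 2) * A - Q - 1 with hm
  set R : ℤ := -(e : ℤ) * A + m / 2 with hR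
  have hQcast : ((Q : ℤ) : ℚ) = ∑ i, ((A / a i : ℕ) : ℚ) := by
    rw [hQ, Int.cast_sum]
    exact Finset.sum_congr rfl fun i _ => Int.cast_natCast _
  -- the floor equals m / 2
  have hfloor : ⌊(((n : ℚ) - 2) * (A : ℚ) - (∑ i, ((A / a i : ℕ) : ℚ)) - 1) / 2⌋ = m / 2 := by
    have h1 : (((n : ℚ) - 2) * (A : ℚ) - (∑ i, ((A / a i : ℕ) : ℚ)) - 1) = (m : ℚ) := by
      rw [hm, Int.cast_sub, Int.cast_sub, Int.cast_mul, hQcast]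
      push_cast
      ring
    rw [h1]
    exact_mod_cast Rat.floor_intCast_div_natCast m 2
  -- key equivalence
  have key : ∀ x : Fin n → ℕ,
      (∑ i, (x i : ℚ) / (a i) < -(e : ℚ) + ((n : ℚ) - 2 - ∑ i, (1 : ℚ) / (a i)) / 2)
        ↔ (∑ i, (x i : ℤ) * ((A / a i : ℕ) : ℤ)) ≤ R := by
    intro x
    set s : ℤ := ∑ i, (x i : ℤ) * ((A / a i : ℕ) : ℤ) with hs
    have hterm : ∀ i : Fin n, (x i : ℚ) / (a i) * A
        = (((x i : ℤ) * ((A / a i : ℕ) : ℤ) : ℤ) : ℚ) := by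
      intro i
      have hai : (a i : ℚ) ≠ 0 := Nat.cast_ne_zero.mpr (ha i).ne'
      rw [Int.cast_mul, Int.cast_natCast, Int.cast_natCast,
        div_mul_eq_mul_div, div_eq_iff hai]
      linear_combination (-(x i : ℚ)) * hq i
    have hsum1 : (∑ i, (x i : ℚ) / (a i)) * A = ((s : ℤ) : ℚ) := by
      rw [Finset.sum_mul, hs, Int.cast_sum]
      exact Finset.sum_congr rfl fun i _ => hterm i
    have hterm2 : ∀ i : Fin n, (1 : ℚ) / (a i) * A = (((A / a i : ℕ) : ℤ) : ℚ) := by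
      intro i
      have hai : (a i : ℚ) ≠ 0 := Nat.cast_ne_zero.mpr (ha i).ne'
      rw [Int.cast_natCast, div_mul_eq_mul_div, div_eq_iff hai]
      linear_combination -hq i
    have hsum2 : (∑ i, (1 : ℚ) / (a i)) * A = ((Q : ℤ) : ℚ) := by
      rw [Finset.sum_mul, hQ, Int.cast_sum]
      exact Finset.sum_congr rfl fun i _ => hterm2 i
    rw [← mul_lt_mul_iff_of_pos_right hApos', hsum1]
    have hrhs : (-(e : ℚ) + ((n : ℚ) - 2 - ∑ i, (1 : ℚ) / (a i)) / 2) * A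
        = ((-2 * e * A + m + 1 : ℤ) : ℚ) / 2 := by
      rw [show (-(e : ℚ) + ((n : ℚ) - 2 - ∑ i, (1 : ℚ) / (a i)) / 2) * A
          = -(e : ℚ) * A + (((n : ℚ) - 2) * A - (∑ i, (1 : ℚ) / (a i)) * A) / 2 by ring,
        hsum2, hm]
      push_cast [hQcast]
      ring
    rw [hrhs, lt_div_iff₀ (by norm_num : (0 : ℚ) < 2)]
    rw [show ((s : ℤ) : ℚ) * 2 = ((s * 2 : ℤ) : ℚ) by push_cast; ring, Int.cast_lt, hR]
    obtain ⟨E, hEdef⟩ : ∃ E : ℤ, (e : ℤ) * A = E := ⟨_, rfl⟩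
    rw [show (-2 * (e : ℤ) * A + m + 1 : ℤ) = -2 * E + m + 1 by rw [← hEdef]; ring,
      show (-(e : ℤ) * A : ℤ) = -E by rw [← hEdef]; ring]
    omega
  -- bijection between the two sets
  have hset : {xy : (Fin n → ℕ) × ℕ |
        (∑ i, (xy.1 i : ℤ) * ((A / a i : ℕ) : ℤ)) + (xy.2 : ℤ)
          = -(e : ℤ) * A
            + ⌊(((n : ℚ) - 2) * (A : ℚ) - (∑ i, ((A / a i : ℕ) : ℚ)) - 1) / 2⌋}
      = (fun x : Fin n → ℕ => (x, (R - ∑ i, (x i : ℤ) * ((A / a i : ℕ) : ℤ)).toNat)) ''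
        {x : Fin n → ℕ |
          ∑ i, (x i : ℚ) / (a i)
            < -(e : ℚ) + ((n : ℚ) - 2 - ∑ i, (1 : ℚ) / (a i)) / 2} := by
    ext ⟨x, y⟩
    simp only [Set.mem_setOf_eq, Set.mem_image, hfloor, Prod.mk.injEq, ← hR]
    constructor
    · intro h
      have hy : (0 : ℤ) ≤ (y : ℤ) := Int.natCast_nonneg y
      refine ⟨x, (key x).mpr (by omega), rfl, ?_⟩
      omega
    · rintro ⟨x', hx', rfl, rfl⟩
      have hle := (key x').mp hx'
      omega
  rw [hset, Set.ncard_image_of_injOn]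
  intro x _ y _ h
  simpa using congrArg Prod.fst h
end
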